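/- arXiv:2303.17576 — 2 statements merged into one kernel-verified Lean document; each statement's English description precedes it below -/
import Mathlib

section
/- The coupled shuffle product on the module spanned by Lions words (with coefficients in a commutative ring) is associative, commutative, and unital with unit the empty word. -/
open scoped Classical
open Finset

structure RawWord (d : ℕ) : Type where
  len : ℕ
  letter : Fin len → Fin d
  tag : Set (Fin len)
  blocks : Set (Set (Fin len))

theorem cardCompl {m n : ℕ} (S : Finset (Fin (m + n))) (hS : S.card = m) :
    Sᶜ.card = n := by
  rw [Finset.card_compl, hS, Fintype.card_fin]; omega

def embS {N k : ℕ} (S : Finset (Fin N)) (h : S.card = k) : Fin k → Fin N :=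
  fun a => ((S.orderIsoOfFin h) a).val

lemma embS_eq {N k : ℕ} (S : Finset (Fin N)) (h : S.card = k) :
    embS S h = ⇑(S.orderEmbOfFin h) := rfl

lemma symm_eq {α : Type*} [LinearOrder α] {s : Finset α} {k : ℕ} (h : s.card = k)
    (x : α) (hx : x ∈ s) (a : Fin k) (ha : s.orderEmbOfFin h a = x) :
    (s.orderIsoOfFin h).symm ⟨x, hx⟩ = a := by
  rw [OrderIso.symm_apply_eq]
  exact Subtype.ext (by rw [Finset.coe_orderIsoOfFin_apply, ha])

/-- composition of `orderEmbOfFin` with a strictly monotone map. -/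
lemma orderEmb_map_comp {k N M : ℕ} (S : Finset (Fin N)) (hS : S.card = k)
    {c : Fin N → Fin M} (hc : StrictMono c)
    (hcard : (S.map ⟨c, hc.injective⟩).card = k) (a : Fin k) :
    (S.map ⟨c, hc.injective⟩).orderEmbOfFin hcard a = c (S.orderEmbOfFin hS a) := by
  have := Finset.orderEmbOfFin_unique (f := fun a => c (S.orderEmbOfFin hS a)) hcard
    (fun x => Finset.mem_map_of_mem _ (Finset.orderEmbOfFin_mem S hS x))
    (hc.comp (S.orderEmbOfFin hS).strictMono)
  exact (congrFun this a).symm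

lemma univ_map_orderEmb {k N : ℕ} (S : Finset (Fin N)) (hS : S.card = k) :
    Finset.univ.map ⟨⇑(S.orderEmbOfFin hS), (S.orderEmbOfFin hS).injective⟩ = S := by
  apply Finset.eq_of_subset_of_card_le
  · intro x hx
    rcases Finset.mem_map.1 hx with ⟨a, _, rfl⟩
    exact Finset.orderEmbOfFin_mem S hS a
  · rw [hS, Finset.card_map, Finset.card_univ, Fintype.card_fin]

def shufW {d : ℕ} (W₁ W₂ : RawWord d)
    (S : Finset (Fin (W₁.len + W₂.len))) (hS : S.card = W₁.len) :
    RawWord d where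
  len := W₁.len + W₂.len
  letter := fun k =>
    if hk : k ∈ S then W₁.letter ((S.orderIsoOfFin hS).symm ⟨k, hk⟩)
    else W₂.letter ((Sᶜ.orderIsoOfFin (cardCompl S hS)).symm
      ⟨k, Finset.mem_compl.mpr hk⟩)
  tag := embS S hS '' W₁.tag ∪ embS Sᶜ (cardCompl S hS) '' W₂.tag
  blocks := (Set.image (embS S hS)) '' W₁.blocks ∪
    (Set.image (embS Sᶜ (cardCompl S hS))) '' W₂.blocks

lemma shufW_letter₁ {d : ℕ} (W₁ W₂ : RawWord d)
    (S : Finset (Fin (W₁.len + W₂.len))) (hS : S.card = W₁.len) (a : Fin W₁.len) :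
    (shufW W₁ W₂ S hS).letter (S.orderEmbOfFin hS a) = W₁.letter a := by
  show (if hk : _ ∈ S then _ else _) = _
  rw [dif_pos (Finset.orderEmbOfFin_mem S hS a)]
  rw [symm_eq hS _ _ a rfl]

lemma shufW_letter₂ {d : ℕ} (W₁ W₂ : RawWord d)
    (S : Finset (Fin (W₁.len + W₂.len))) (hS : S.card = W₁.len) (a : Fin W₂.len) :
    (shufW W₁ W₂ S hS).letter (Sᶜ.orderEmbOfFin (cardCompl S hS) a) = W₂.letter a := by
  have hk : Sᶜ.orderEmbOfFin (cardCompl S hS) a ∉ S := by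
    have h2 := Finset.orderEmbOfFin_mem Sᶜ (cardCompl S hS) a
    exact Finset.mem_compl.mp h2
  show (if hk : _ ∈ S then _ else _) = _
  rw [dif_neg hk]
  rw [symm_eq (cardCompl S hS) _ _ a rfl]

lemma cardUC {N m n p : ℕ} (hN : N = m + n + p) (A B : Finset (Fin N))
    (hA : A.card = m) (hB : B.card = n) (hAB : Disjoint A B) :
    (A ∪ B)ᶜ.card = p := by
  rw [Finset.card_compl, Finset.card_union_of_disjoint hAB, hA, hB, Fintype.card_fin]
  omega

/-- A triple shuffle word. -/
def tripleW {d : ℕ} (W₁ W₂ W₃ : RawWord d) {N : ℕ}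
    (hN : N = W₁.len + W₂.len + W₃.len) (A B : Finset (Fin N))
    (hA : A.card = W₁.len) (hB : B.card = W₂.len) (hAB : Disjoint A B) :
    RawWord d where
  len := N
  letter := fun k =>
    if hk : k ∈ A then W₁.letter ((A.orderIsoOfFin hA).symm ⟨k, hk⟩)
    else if hk2 : k ∈ B then W₂.letter ((B.orderIsoOfFin hB).symm ⟨k, hk2⟩)
    else W₃.letter (((A ∪ B)ᶜ.orderIsoOfFin (cardUC hN A B hA hB hAB)).symm
      ⟨k, by simp [hk, hk2]⟩)
  tag := embS A hA '' W₁.tag ∪ embS B hB '' W₂.tag ∪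
    embS (A ∪ B)ᶜ (cardUC hN A B hA hB hAB) '' W₃.tag
  blocks := (Set.image (embS A hA)) '' W₁.blocks ∪
    (Set.image (embS B hB)) '' W₂.blocks ∪
    (Set.image (embS (A ∪ B)ᶜ (cardUC hN A B hA hB hAB))) '' W₃.blocks

lemma tripleW_letter₁ {d : ℕ} (W₁ W₂ W₃ : RawWord d) {N : ℕ}
    (hN : N = W₁.len + W₂.len + W₃.len) (A B : Finset (Fin N))
    (hA : A.card = W₁.len) (hB : B.card = W₂.len) (hAB : Disjoint A B)
    (a : Fin W₁.len) :
    (tripleW W₁ W₂ W₃ hN A B hA hB hAB).letter (A.orderEmbOfFin hA a) = W₁.letter a := by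
  show (if hk : _ ∈ A then _ else _) = _
  rw [dif_pos (Finset.orderEmbOfFin_mem A hA a), symm_eq hA _ _ a rfl]

lemma tripleW_letter₂ {d : ℕ} (W₁ W₂ W₃ : RawWord d) {N : ℕ}
    (hN : N = W₁.len + W₂.len + W₃.len) (A B : Finset (Fin N))
    (hA : A.card = W₁.len) (hB : B.card = W₂.len) (hAB : Disjoint A B)
    (a : Fin W₂.len) :
    (tripleW W₁ W₂ W₃ hN A B hA hB hAB).letter (B.orderEmbOfFin hB a) = W₂.letter a := by
  have h1 : B.orderEmbOfFin hB a ∉ A := by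
    intro h
    exact (Finset.disjoint_left.mp hAB h) (Finset.orderEmbOfFin_mem B hB a)
  show (if hk : _ ∈ A then _ else _) = _
  rw [dif_neg h1, dif_pos (Finset.orderEmbOfFin_mem B hB a), symm_eq hB _ _ a rfl]

lemma tripleW_letter₃ {d : ℕ} (W₁ W₂ W₃ : RawWord d) {N : ℕ}
    (hN : N = W₁.len + W₂.len + W₃.len) (A B : Finset (Fin N))
    (hA : A.card = W₁.len) (hB : B.card = W₂.len) (hAB : Disjoint A B)
    (a : Fin W₃.len) :
    (tripleW W₁ W₂ W₃ hN A B hA hB hAB).letter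
      ((A ∪ B)ᶜ.orderEmbOfFin (cardUC hN A B hA hB hAB) a) = W₃.letter a := by
  have hmem := Finset.orderEmbOfFin_mem (A ∪ B)ᶜ (cardUC hN A B hA hB hAB) a
  have h1 : (A ∪ B)ᶜ.orderEmbOfFin (cardUC hN A B hA hB hAB) a ∉ A := by
    intro h; exact (Finset.mem_compl.mp hmem) (Finset.mem_union_left _ h)
  have h2 : (A ∪ B)ᶜ.orderEmbOfFin (cardUC hN A B hA hB hAB) a ∉ B := by
    intro h; exact (Finset.mem_compl.mp hmem) (Finset.mem_union_right _ h)
  show (if hk : _ ∈ A then _ else _) = _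
  rw [dif_neg h1, dif_neg h2, symm_eq (cardUC hN A B hA hB hAB) _ _ a rfl]

/-- Extensionality for raw words with a cast along a length equality. -/
lemma RawWord.extCast {d : ℕ} (W V : RawWord d) (h : W.len = V.len)
    (hl : ∀ k : Fin W.len, W.letter k = V.letter (Fin.cast h k))
    (ht : V.tag = Fin.cast h '' W.tag)
    (hb : V.blocks = Set.image (Fin.cast h) '' W.blocks) : W = V := by
  obtain ⟨n, l, t, b⟩ := W
  obtain ⟨n', l', t', b'⟩ := V
  simp only at h
  subst h
  have hc : ∀ (p : n = n), (Fin.cast p : Fin n → Fin n) = id := fun p => funext fun k => rfl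
  have him : (Set.image (id : Fin n → Fin n)) = id := funext fun s => Set.image_id s
  simp only [hc, him, id_eq, Set.image_id, Set.image_id'] at hl ht hb
  simp only [RawWord.mk.injEq, heq_eq_eq, true_and]
  exact ⟨funext fun k => hl k, ht.symm, hb.symm⟩

lemma exists_emb {α : Type*} [LinearOrder α] {s : Finset α} {k : ℕ} (h : s.card = k)
    {x : α} (hx : x ∈ s) : ∃ a, s.orderEmbOfFin h a = x :=
  ⟨(s.orderIsoOfFin h).symm ⟨x, hx⟩, by
    rw [← Finset.coe_orderIsoOfFin_apply, OrderIso.apply_symm_apply]⟩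

lemma orderEmb_congr {α : Type*} [LinearOrder α] {s t : Finset α} (hst : s = t)
    {k : ℕ} (h : s.card = k) (h' : t.card = k) :
    ⇑(s.orderEmbOfFin h) = ⇑(t.orderEmbOfFin h') := by subst hst; rfl

lemma image_image_comp {α β γ : Type*} (f : β → γ) (g : α → β) (P : Set (Set α)) :
    Set.image (fun x => f (g x)) '' P = Set.image f '' (Set.image g '' P) := by
  have h : Set.image (fun x => f (g x)) = (Set.image f ∘ Set.image g) :=
    funext fun s => Set.image_comp f g s
  rw [h, Set.image_comp]

lemma fin_cast_id : ∀ (M : ℕ) (p : M = M), (Fin.cast p : Fin M → Fin M) = id :=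
  fun _ _ => funext fun _ => rfl

lemma assocL {d : ℕ} (W₁ W₂ W₃ : RawWord d)
    (S : Finset (Fin (W₁.len + W₂.len))) (hS : S.card = W₁.len)
    (S' : Finset (Fin (W₁.len + W₂.len + W₃.len)))
    (hS' : S'.card = W₁.len + W₂.len) :
    shufW (shufW W₁ W₂ S hS) W₃ S' hS' =
      tripleW W₁ W₂ W₃ rfl
        (S.map ⟨⇑(S'.orderEmbOfFin hS'), (S'.orderEmbOfFin hS').injective⟩)
        (Sᶜ.map ⟨⇑(S'.orderEmbOfFin hS'), (S'.orderEmbOfFin hS').injective⟩)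
        (by rw [Finset.card_map, hS]) (by rw [Finset.card_map, cardCompl S hS])
        ((Finset.disjoint_map _).mpr disjoint_compl_right) := by
  set e : Fin (W₁.len + W₂.len) ↪ Fin (W₁.len + W₂.len + W₃.len) :=
    ⟨⇑(S'.orderEmbOfFin hS'), (S'.orderEmbOfFin hS').injective⟩ with he
  set A := S.map e with hA'
  set B := Sᶜ.map e with hB'
  have hA : A.card = W₁.len := by rw [hA', Finset.card_map, hS]
  have hB : B.card = W₂.len := by rw [hB', Finset.card_map, cardCompl S hS]
  have hUn : A ∪ B = S' := by
    rw [hA', hB', ← Finset.map_union, Finset.union_compl]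
    exact univ_map_orderEmb S' hS'
  have eqA : ∀ a, A.orderEmbOfFin hA a = S'.orderEmbOfFin hS' (S.orderEmbOfFin hS a) :=
    fun a => orderEmb_map_comp S hS (S'.orderEmbOfFin hS').strictMono _ a
  have eqB : ∀ a, B.orderEmbOfFin hB a = S'.orderEmbOfFin hS' (Sᶜ.orderEmbOfFin (cardCompl S hS) a) :=
    fun a => orderEmb_map_comp Sᶜ (cardCompl S hS) (S'.orderEmbOfFin hS').strictMono _ a
  have eqC : ⇑((A ∪ B)ᶜ.orderEmbOfFin (cardUC rfl A B hA hB
      ((Finset.disjoint_map _).mpr disjoint_compl_right))) =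
      ⇑(S'ᶜ.orderEmbOfFin (cardCompl S' hS')) :=
    orderEmb_congr (by rw [hUn]) _ _
  refine (RawWord.extCast _ _ rfl ?_ ?_ ?_)
  · intro k
    have hck : (Fin.cast rfl k : Fin (W₁.len + W₂.len + W₃.len)) = k := rfl
    erw [hck]
    by_cases hk : k ∈ S'
    · obtain ⟨b, hb⟩ := exists_emb hS' hk
      by_cases hbS : b ∈ S
      · obtain ⟨a, ha⟩ := exists_emb hS hbS
        have h1 : (shufW (shufW W₁ W₂ S hS) W₃ S' hS').letter k = W₁.letter a := by
          rw [← hb, ← ha]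
          exact (shufW_letter₁ (shufW W₁ W₂ S hS) W₃ S' hS' _).trans
            (shufW_letter₁ W₁ W₂ S hS a)
        have h2 : (tripleW W₁ W₂ W₃ rfl A B hA hB
            ((Finset.disjoint_map _).mpr disjoint_compl_right)).letter k = W₁.letter a := by
          have hk₁ : A.orderEmbOfFin hA a = k := by rw [eqA a, ha, hb]
          rw [← hk₁]
          exact tripleW_letter₁ W₁ W₂ W₃ rfl A B hA hB _ a
        rw [h1, h2]
      · have hbS' : b ∈ Sᶜ := Finset.mem_compl.mpr hbS
        obtain ⟨a, ha⟩ := exists_emb (cardCompl S hS) hbS'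
        have h1 : (shufW (shufW W₁ W₂ S hS) W₃ S' hS').letter k = W₂.letter a := by
          rw [← hb, ← ha]
          exact (shufW_letter₁ (shufW W₁ W₂ S hS) W₃ S' hS' _).trans
            (shufW_letter₂ W₁ W₂ S hS a)
        have h2 : (tripleW W₁ W₂ W₃ rfl A B hA hB
            ((Finset.disjoint_map _).mpr disjoint_compl_right)).letter k = W₂.letter a := by
          have hk₁ : B.orderEmbOfFin hB a = k := by rw [eqB a, ha, hb]
          rw [← hk₁]
          exact tripleW_letter₂ W₁ W₂ W₃ rfl A B hA hB _ a
        rw [h1, h2]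
    · have hk' : k ∈ S'ᶜ := Finset.mem_compl.mpr hk
      obtain ⟨a, ha⟩ := exists_emb (cardCompl S' hS') hk'
      have h1 : (shufW (shufW W₁ W₂ S hS) W₃ S' hS').letter k = W₃.letter a := by
        rw [← ha]
        exact shufW_letter₂ (shufW W₁ W₂ S hS) W₃ S' hS' a
      have h2 : (tripleW W₁ W₂ W₃ rfl A B hA hB
          ((Finset.disjoint_map _).mpr disjoint_compl_right)).letter k = W₃.letter a := by
        have hk₁ : (A ∪ B)ᶜ.orderEmbOfFin (cardUC rfl A B hA hB
            ((Finset.disjoint_map _).mpr disjoint_compl_right)) a = k := by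
          rw [congrFun eqC a, ha]
        rw [← hk₁]
        exact tripleW_letter₃ W₁ W₂ W₃ rfl A B hA hB _ a
      rw [h1, h2]
  · erw [fin_cast_id, Set.image_id]
    show embS A hA '' W₁.tag ∪ embS B hB '' W₂.tag ∪ _ '' W₃.tag =
      embS S' hS' '' (embS S hS '' W₁.tag ∪ embS Sᶜ (cardCompl S hS) '' W₂.tag) ∪
        embS S'ᶜ (cardCompl S' hS') '' W₃.tag
    rw [Set.image_union, ← Set.image_comp, ← Set.image_comp]
    have e1 : embS A hA = (embS S' hS') ∘ (embS S hS) := funext fun a => eqA a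
    have e2 : embS B hB = (embS S' hS') ∘ (embS Sᶜ (cardCompl S hS)) := funext fun a => eqB a
    have e3 : embS (A ∪ B)ᶜ (cardUC rfl A B hA hB
        ((Finset.disjoint_map _).mpr disjoint_compl_right)) =
        embS S'ᶜ (cardCompl S' hS') := eqC
    rw [e1, e2, e3]
  · erw [fin_cast_id]
    have him : (Set.image (id : Fin (W₁.len + W₂.len + W₃.len) → _)) = id :=
      funext fun s => Set.image_id s
    erw [him, Set.image_id]
    show (Set.image (embS A hA)) '' W₁.blocks ∪ (Set.image (embS B hB)) '' W₂.blocks ∪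
        (Set.image (embS (A ∪ B)ᶜ _)) '' W₃.blocks =
      (Set.image (embS S' hS')) ''
          ((Set.image (embS S hS)) '' W₁.blocks ∪
            (Set.image (embS Sᶜ (cardCompl S hS))) '' W₂.blocks) ∪
        (Set.image (embS S'ᶜ (cardCompl S' hS'))) '' W₃.blocks
    rw [Set.image_union, ← image_image_comp, ← image_image_comp]
    have e1 : embS A hA = fun a => (embS S' hS') ((embS S hS) a) := funext fun a => eqA a
    have e2 : embS B hB = fun a => (embS S' hS') ((embS Sᶜ (cardCompl S hS)) a) :=
      funext fun a => eqB a
    have e3 : embS (A ∪ B)ᶜ (cardUC rfl A B hA hB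
        ((Finset.disjoint_map _).mpr disjoint_compl_right)) =
        embS S'ᶜ (cardCompl S' hS') := eqC
    rw [e1, e2, e3]

lemma compl_eq_of_union {N : ℕ} (s t : Finset (Fin N)) (hu : s ∪ t = Finset.univ)
    (hd : Disjoint s t) : sᶜ = t := by
  ext x
  simp only [Finset.mem_compl]
  constructor
  · intro hx
    have : x ∈ s ∪ t := by rw [hu]; exact Finset.mem_univ x
    rcases Finset.mem_union.mp this with h | h
    · exact absurd h hx
    · exact h
  · intro hx hs
    exact (Finset.disjoint_left.mp hd hs) hx

lemma assocR {d : ℕ} (W₁ W₂ W₃ : RawWord d)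
    (T : Finset (Fin (W₂.len + W₃.len))) (hT : T.card = W₂.len)
    (T' : Finset (Fin (W₁.len + (W₂.len + W₃.len)))) (hT' : T'.card = W₁.len) :
    shufW W₁ (shufW W₂ W₃ T hT) T' hT' =
      tripleW W₁ W₂ W₃ (add_assoc W₁.len W₂.len W₃.len).symm T'
        (T.map ⟨⇑(T'ᶜ.orderEmbOfFin (cardCompl T' hT')),
          (T'ᶜ.orderEmbOfFin (cardCompl T' hT')).injective⟩)
        hT' (by rw [Finset.card_map, hT])
        (by
          rw [Finset.disjoint_right]
          intro x hx
          rcases Finset.mem_map.mp hx with ⟨b, _, rfl⟩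
          exact Finset.mem_compl.mp (Finset.orderEmbOfFin_mem T'ᶜ (cardCompl T' hT') b)) := by
  set e : Fin (W₂.len + W₃.len) ↪ Fin (W₁.len + (W₂.len + W₃.len)) :=
    ⟨⇑(T'ᶜ.orderEmbOfFin (cardCompl T' hT')),
      (T'ᶜ.orderEmbOfFin (cardCompl T' hT')).injective⟩ with he
  set B := T.map e with hB'
  have hB : B.card = W₂.len := by rw [hB', Finset.card_map, hT]
  have hdAB : Disjoint T' B := by
    rw [Finset.disjoint_right]
    intro x hx
    rcases Finset.mem_map.mp hx with ⟨b, _, rfl⟩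
    exact Finset.mem_compl.mp (Finset.orderEmbOfFin_mem T'ᶜ (cardCompl T' hT') b)
  have hsplit : T'ᶜ = T.map e ∪ Tᶜ.map e := by
    rw [← Finset.map_union, Finset.union_compl]
    exact (univ_map_orderEmb _ _).symm
  have hUnC : (T' ∪ B)ᶜ = Tᶜ.map e := by
    apply compl_eq_of_union
    · rw [Finset.union_assoc, hB', ← hsplit, Finset.union_compl]
    · apply Finset.disjoint_union_left.mpr
      constructor
      · rw [Finset.disjoint_right]
        intro x hx
        rcases Finset.mem_map.mp hx with ⟨b, _, rfl⟩
        exact Finset.mem_compl.mp (Finset.orderEmbOfFin_mem T'ᶜ (cardCompl T' hT') b)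
      · exact (Finset.disjoint_map _).mpr disjoint_compl_right
  have eqB : ∀ a, B.orderEmbOfFin hB a =
      T'ᶜ.orderEmbOfFin (cardCompl T' hT') (T.orderEmbOfFin hT a) :=
    fun a => orderEmb_map_comp T hT (T'ᶜ.orderEmbOfFin (cardCompl T' hT')).strictMono _ a
  have hCc : (Tᶜ.map e).card = W₃.len := by
    rw [Finset.card_map, cardCompl T hT]
  have eqC : ⇑((T' ∪ B)ᶜ.orderEmbOfFin (cardUC (add_assoc W₁.len W₂.len W₃.len).symm T' B hT' hB hdAB)) =
      fun a => T'ᶜ.orderEmbOfFin (cardCompl T' hT') (Tᶜ.orderEmbOfFin (cardCompl T hT) a) := by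
    rw [orderEmb_congr hUnC _ hCc]
    exact funext fun a =>
      orderEmb_map_comp Tᶜ (cardCompl T hT) (T'ᶜ.orderEmbOfFin (cardCompl T' hT')).strictMono _ a
  refine (RawWord.extCast _ _ rfl ?_ ?_ ?_)
  · intro k
    have hck : (Fin.cast rfl k : Fin (W₁.len + (W₂.len + W₃.len))) = k := rfl
    erw [hck]
    by_cases hk : k ∈ T'
    · obtain ⟨a, ha⟩ := exists_emb hT' hk
      have h1 : (shufW W₁ (shufW W₂ W₃ T hT) T' hT').letter k = W₁.letter a := by
        rw [← ha]; exact shufW_letter₁ W₁ (shufW W₂ W₃ T hT) T' hT' a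
      have h2 : (tripleW W₁ W₂ W₃ (add_assoc W₁.len W₂.len W₃.len).symm T' B hT' hB
          hdAB).letter k = W₁.letter a := by
        rw [← ha]; exact tripleW_letter₁ W₁ W₂ W₃ _ T' B hT' hB hdAB a
      rw [h1, h2]
    · have hk' : k ∈ T'ᶜ := Finset.mem_compl.mpr hk
      obtain ⟨b, hb⟩ := exists_emb (cardCompl T' hT') hk'
      by_cases hbT : b ∈ T
      · obtain ⟨a, ha⟩ := exists_emb hT hbT
        have h1 : (shufW W₁ (shufW W₂ W₃ T hT) T' hT').letter k = W₂.letter a := by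
          rw [← hb, ← ha]
          exact (shufW_letter₂ W₁ (shufW W₂ W₃ T hT) T' hT' _).trans
            (shufW_letter₁ W₂ W₃ T hT a)
        have h2 : (tripleW W₁ W₂ W₃ (add_assoc W₁.len W₂.len W₃.len).symm T' B hT' hB
            hdAB).letter k = W₂.letter a := by
          have hk₁ : B.orderEmbOfFin hB a = k := by rw [eqB a, ha, hb]
          rw [← hk₁]
          exact tripleW_letter₂ W₁ W₂ W₃ _ T' B hT' hB hdAB a
        rw [h1, h2]
      · have hbT' : b ∈ Tᶜ := Finset.mem_compl.mpr hbT
        obtain ⟨a, ha⟩ := exists_emb (cardCompl T hT) hbT'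
        have h1 : (shufW W₁ (shufW W₂ W₃ T hT) T' hT').letter k = W₃.letter a := by
          rw [← hb, ← ha]
          exact (shufW_letter₂ W₁ (shufW W₂ W₃ T hT) T' hT' _).trans
            (shufW_letter₂ W₂ W₃ T hT a)
        have h2 : (tripleW W₁ W₂ W₃ (add_assoc W₁.len W₂.len W₃.len).symm T' B hT' hB
            hdAB).letter k = W₃.letter a := by
          have hk₁ : (T' ∪ B)ᶜ.orderEmbOfFin (cardUC (add_assoc W₁.len W₂.len W₃.len).symm
              T' B hT' hB hdAB) a = k := by
            rw [congrFun eqC a, ha, hb]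
          rw [← hk₁]
          exact tripleW_letter₃ W₁ W₂ W₃ _ T' B hT' hB hdAB a
        rw [h1, h2]
  · erw [fin_cast_id, Set.image_id]
    show embS T' hT' '' W₁.tag ∪ embS B hB '' W₂.tag ∪ _ '' W₃.tag =
      embS T' hT' '' W₁.tag ∪ embS T'ᶜ (cardCompl T' hT') ''
        (embS T hT '' W₂.tag ∪ embS Tᶜ (cardCompl T hT) '' W₃.tag)
    rw [Set.image_union, ← Set.image_comp, ← Set.image_comp]
    have e2 : embS B hB = (embS T'ᶜ (cardCompl T' hT')) ∘ (embS T hT) :=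
      funext fun a => eqB a
    have e3 : embS (T' ∪ B)ᶜ (cardUC (add_assoc W₁.len W₂.len W₃.len).symm T' B hT' hB hdAB) =
        (embS T'ᶜ (cardCompl T' hT')) ∘ (embS Tᶜ (cardCompl T hT)) := eqC
    rw [e2, e3, Set.union_assoc]
  · erw [fin_cast_id]
    have him : (Set.image (id : Fin (W₁.len + (W₂.len + W₃.len)) → _)) = id :=
      funext fun s => Set.image_id s
    erw [him, Set.image_id]
    show (Set.image (embS T' hT')) '' W₁.blocks ∪ (Set.image (embS B hB)) '' W₂.blocks ∪
        (Set.image (embS (T' ∪ B)ᶜ _)) '' W₃.blocks =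
      (Set.image (embS T' hT')) '' W₁.blocks ∪
        (Set.image (embS T'ᶜ (cardCompl T' hT'))) ''
          ((Set.image (embS T hT)) '' W₂.blocks ∪
            (Set.image (embS Tᶜ (cardCompl T hT))) '' W₃.blocks)
    rw [Set.image_union, ← image_image_comp, ← image_image_comp]
    have e2 : embS B hB = fun a => (embS T'ᶜ (cardCompl T' hT')) ((embS T hT) a) :=
      funext fun a => eqB a
    have e3 : embS (T' ∪ B)ᶜ (cardUC (add_assoc W₁.len W₂.len W₃.len).symm T' B hT' hB hdAB) =
        fun a => (embS T'ᶜ (cardCompl T' hT')) ((embS Tᶜ (cardCompl T hT)) a) := eqC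
    rw [e2, e3, Set.union_assoc]

noncomputable def shufP {d : ℕ} (R : Type) [CommRing R] (W₁ W₂ : RawWord d) :
    RawWord d →₀ R :=
  ∑ S : Finset (Fin (W₁.len + W₂.len)),
    if hS : S.card = W₁.len then Finsupp.single (shufW W₁ W₂ S hS) 1 else 0

noncomputable def wmul {d : ℕ} (R : Type) [CommRing R]
    (x y : RawWord d →₀ R) : RawWord d →₀ R :=
  x.sum fun W₁ r => y.sum fun W₂ s => (r * s) • shufP R W₁ W₂

def emptyW (d : ℕ) : RawWord d :=
  ⟨0, Fin.elim0, ∅, ∅⟩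

noncomputable def innerM {d : ℕ} (R : Type) [CommRing R] (W₁ : RawWord d) :
    (RawWord d →₀ R) →ₗ[R] (RawWord d →₀ R) :=
  Finsupp.lsum R fun W₂ => LinearMap.toSpanSingleton R _ (shufP R W₁ W₂)

noncomputable def Bmul {d : ℕ} (R : Type) [CommRing R] :
    (RawWord d →₀ R) →ₗ[R] (RawWord d →₀ R) →ₗ[R] (RawWord d →₀ R) :=
  Finsupp.lsum R fun W₁ =>
    LinearMap.toSpanSingleton R ((RawWord d →₀ R) →ₗ[R] (RawWord d →₀ R)) (innerM R W₁)

lemma innerM_apply {d : ℕ} (R : Type) [CommRing R] (W₁ : RawWord d) (y : RawWord d →₀ R) :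
    innerM R W₁ y = y.sum fun W₂ s => s • shufP R W₁ W₂ := by
  rw [innerM, Finsupp.lsum_apply]
  exact Finsupp.sum_congr fun W₂ _ => rfl

lemma wmul_eq {d : ℕ} (R : Type) [CommRing R] (x y : RawWord d →₀ R) :
    wmul R x y = Bmul R x y := by
  rw [wmul, Bmul, Finsupp.lsum_apply]
  have happ : (x.sum fun W₁ r =>
      LinearMap.toSpanSingleton R ((RawWord d →₀ R) →ₗ[R] (RawWord d →₀ R)) (innerM R W₁) r) y
      = x.sum fun W₁ r => r • innerM R W₁ y := by
    rw [Finsupp.sum, Finsupp.sum, LinearMap.sum_apply]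
    refine Finset.sum_congr rfl fun W₁ _ => ?_
    rw [LinearMap.toSpanSingleton_apply, LinearMap.smul_apply]
  rw [happ]
  refine Finsupp.sum_congr fun W₁ _ => ?_
  rw [innerM_apply, Finsupp.smul_sum]
  refine Finsupp.sum_congr fun W₂ _ => ?_
  rw [mul_smul]

lemma Bmul_single {d : ℕ} (R : Type) [CommRing R] (W₁ : RawWord d) (r : R) :
    Bmul R (Finsupp.single W₁ r) = r • innerM R W₁ := by
  rw [Bmul, Finsupp.lsum_single, LinearMap.toSpanSingleton_apply]

lemma Bmul_single_single {d : ℕ} (R : Type) [CommRing R] (W₁ W₂ : RawWord d) (r s : R) :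
    Bmul R (Finsupp.single W₁ r) (Finsupp.single W₂ s) = (r * s) • shufP R W₁ W₂ := by
  rw [Bmul_single, LinearMap.smul_apply, innerM_apply, Finsupp.sum_single_index (by simp),
    mul_smul]

noncomputable def T3 {d : ℕ} (R : Type) [CommRing R] (W₁ W₂ W₃ : RawWord d) (N : ℕ)
    (hN : N = W₁.len + W₂.len + W₃.len) : RawWord d →₀ R :=
  ∑ AB : Finset (Fin N) × Finset (Fin N),
    if h : AB.1.card = W₁.len ∧ AB.2.card = W₂.len ∧ Disjoint AB.1 AB.2 then
      Finsupp.single (tripleW W₁ W₂ W₃ hN AB.1 AB.2 h.1 h.2.1 h.2.2) 1 else 0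

lemma T3_cast {d : ℕ} (R : Type) [CommRing R] (W₁ W₂ W₃ : RawWord d) (N N' : ℕ)
    (h : N = N') (hN : N = W₁.len + W₂.len + W₃.len)
    (hN' : N' = W₁.len + W₂.len + W₃.len) :
    T3 R W₁ W₂ W₃ N hN = T3 R W₁ W₂ W₃ N' hN' := by subst h; rfl

lemma Bmul_shufP_single {d : ℕ} (R : Type) [CommRing R] (W₁ W₂ W₃ : RawWord d) :
    Bmul R (shufP R W₁ W₂) (Finsupp.single W₃ (1 : R)) =
      ∑ S : Finset (Fin (W₁.len + W₂.len)),
        ∑ S' : Finset (Fin (W₁.len + W₂.len + W₃.len)),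
          (if hS : S.card = W₁.len then
            (if hS' : S'.card = W₁.len + W₂.len then
              Finsupp.single (shufW (shufW W₁ W₂ S hS) W₃ S' hS') (1 : R) else 0) else 0) := by
  rw [shufP, map_sum, LinearMap.sum_apply]
  refine Finset.sum_congr rfl fun S _ => ?_
  by_cases hS : S.card = W₁.len
  · simp only [dif_pos hS]
    rw [Bmul_single_single, one_mul, one_smul]
    rfl
  · simp only [dif_neg hS, map_zero, LinearMap.zero_apply, Finset.sum_const_zero]

lemma Bmul_single_shufP {d : ℕ} (R : Type) [CommRing R] (W₁ W₂ W₃ : RawWord d) :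
    Bmul R (Finsupp.single W₁ (1 : R)) (shufP R W₂ W₃) =
      ∑ T : Finset (Fin (W₂.len + W₃.len)),
        ∑ T' : Finset (Fin (W₁.len + (W₂.len + W₃.len))),
          (if hT : T.card = W₂.len then
            (if hT' : T'.card = W₁.len then
              Finsupp.single (shufW W₁ (shufW W₂ W₃ T hT) T' hT') (1 : R) else 0) else 0) := by
  rw [Bmul_single, one_smul, shufP, map_sum]
  refine Finset.sum_congr rfl fun T _ => ?_
  by_cases hT : T.card = W₂.len
  · simp only [dif_pos hT]
    rw [innerM_apply, Finsupp.sum_single_index (by simp), one_smul]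
    rfl
  · simp only [dif_neg hT, map_zero, Finset.sum_const_zero]

lemma filter_map_emb {N k : ℕ} (U : Finset (Fin N)) (hU : U.card = k)
    (A : Finset (Fin N)) (hA : A ⊆ U) :
    (Finset.univ.filter (fun a => U.orderEmbOfFin hU a ∈ A)).map
      ⟨⇑(U.orderEmbOfFin hU), (U.orderEmbOfFin hU).injective⟩ = A := by
  ext x
  simp only [Finset.mem_map, Finset.mem_filter, Finset.mem_univ, true_and,
    Function.Embedding.coeFn_mk]
  constructor
  · rintro ⟨a, ha, rfl⟩; exact ha
  · intro hx
    obtain ⟨a, ha⟩ := exists_emb hU (hA hx)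
    exact ⟨a, by rw [ha]; exact hx, ha⟩

lemma union_cancel {N : ℕ} (A X Y : Finset (Fin N)) (h : A ∪ X = A ∪ Y)
    (hX : Disjoint A X) (hY : Disjoint A Y) : X = Y := by
  ext x
  constructor
  · intro hx
    have h1 : x ∈ A ∪ Y := by rw [← h]; exact Finset.mem_union_right _ hx
    rcases Finset.mem_union.mp h1 with h2 | h2
    · exact absurd hx (Finset.disjoint_left.mp hX h2)
    · exact h2
  · intro hx
    have h1 : x ∈ A ∪ X := by rw [h]; exact Finset.mem_union_right _ hx
    rcases Finset.mem_union.mp h1 with h2 | h2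
    · exact absurd hx (Finset.disjoint_left.mp hY h2)
    · exact h2

lemma sumL {d : ℕ} (R : Type) [CommRing R] (W₁ W₂ W₃ : RawWord d) :
    (∑ S : Finset (Fin (W₁.len + W₂.len)),
        ∑ S' : Finset (Fin (W₁.len + W₂.len + W₃.len)),
          (if hS : S.card = W₁.len then
            (if hS' : S'.card = W₁.len + W₂.len then
              Finsupp.single (shufW (shufW W₁ W₂ S hS) W₃ S' hS') (1 : R) else 0) else 0))
      = T3 R W₁ W₂ W₃ (W₁.len + W₂.len + W₃.len) rfl := by
  classical
  rw [← Finset.sum_product', T3]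
  rw [← Finset.sum_filter_of_ne (p := fun p : Finset (Fin (W₁.len + W₂.len)) ×
      Finset (Fin (W₁.len + W₂.len + W₃.len)) =>
      p.1.card = W₁.len ∧ p.2.card = W₁.len + W₂.len)
    (by
      intro p _ hne
      by_cases h1 : p.1.card = W₁.len
      · by_cases h2 : p.2.card = W₁.len + W₂.len
        · exact ⟨h1, h2⟩
        · exact absurd (by rw [dif_pos h1, dif_neg h2]) hne
      · exact absurd (dif_neg h1) hne)]
  rw [← Finset.sum_filter_of_ne (p := fun q : Finset (Fin (W₁.len + W₂.len + W₃.len)) ×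
      Finset (Fin (W₁.len + W₂.len + W₃.len)) =>
      q.1.card = W₁.len ∧ q.2.card = W₂.len ∧ Disjoint q.1 q.2)
    (by
      intro q _ hne
      by_cases h1 : q.1.card = W₁.len ∧ q.2.card = W₂.len ∧ Disjoint q.1 q.2
      · exact h1
      · exact absurd (dif_neg h1) hne)]
  refine Finset.sum_bij'
    (i := fun p hp =>
      (p.1.map ⟨⇑(p.2.orderEmbOfFin (Finset.mem_filter.mp hp).2.2),
        (p.2.orderEmbOfFin (Finset.mem_filter.mp hp).2.2).injective⟩,
       p.1ᶜ.map ⟨⇑(p.2.orderEmbOfFin (Finset.mem_filter.mp hp).2.2),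
        (p.2.orderEmbOfFin (Finset.mem_filter.mp hp).2.2).injective⟩))
    (j := fun q hq =>
      (Finset.univ.filter (fun a => (q.1 ∪ q.2).orderEmbOfFin
          (by
            have h := (Finset.mem_filter.mp hq).2
            rw [Finset.card_union_of_disjoint h.2.2, h.1, h.2.1]) a ∈ q.1),
        q.1 ∪ q.2))
    ?_ ?_ ?_ ?_ ?_
  · -- hi : i p ∈ filterR
    intro p hp
    obtain ⟨-, h1, h2⟩ := Finset.mem_filter.mp hp
    refine Finset.mem_filter.mpr ⟨Finset.mem_univ _, ?_, ?_, ?_⟩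
    · rw [Finset.card_map, h1]
    · rw [Finset.card_map, cardCompl p.1 h1]
    · exact (Finset.disjoint_map _).mpr disjoint_compl_right
  · -- hj : j q ∈ filterL
    intro q hq
    obtain ⟨-, h1, h2, h3⟩ := Finset.mem_filter.mp hq
    have hU : (q.1 ∪ q.2).card = W₁.len + W₂.len := by
      rw [Finset.card_union_of_disjoint h3, h1, h2]
    refine Finset.mem_filter.mpr ⟨Finset.mem_univ _, ?_, hU⟩
    have := filter_map_emb (q.1 ∪ q.2) hU q.1 Finset.subset_union_left
    calc (Finset.univ.filter (fun a => (q.1 ∪ q.2).orderEmbOfFin _ a ∈ q.1)).card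
        = ((Finset.univ.filter (fun a => (q.1 ∪ q.2).orderEmbOfFin hU a ∈ q.1)).map
            ⟨⇑((q.1 ∪ q.2).orderEmbOfFin hU), ((q.1 ∪ q.2).orderEmbOfFin hU).injective⟩).card := by
          rw [Finset.card_map]
      _ = q.1.card := by rw [this]
      _ = W₁.len := h1
  · -- left_inv
    intro p hp
    obtain ⟨-, h1, h2⟩ := Finset.mem_filter.mp hp
    have hUn : p.1.map ⟨⇑(p.2.orderEmbOfFin h2), (p.2.orderEmbOfFin h2).injective⟩ ∪
        p.1ᶜ.map ⟨⇑(p.2.orderEmbOfFin h2), (p.2.orderEmbOfFin h2).injective⟩ = p.2 := by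
      rw [← Finset.map_union, Finset.union_compl]
      exact univ_map_orderEmb p.2 h2
    refine Prod.ext ?_ ?_
    · show Finset.univ.filter _ = p.1
      ext a
      simp only [Finset.mem_filter, Finset.mem_univ, true_and]
      rw [orderEmb_congr hUn _ h2]
      exact Finset.mem_map' _
    · exact hUn
  · -- right_inv
    intro q hq
    obtain ⟨-, h1, h2, h3⟩ := Finset.mem_filter.mp hq
    have hU : (q.1 ∪ q.2).card = W₁.len + W₂.len := by
      rw [Finset.card_union_of_disjoint h3, h1, h2]
    have hm1 := filter_map_emb (q.1 ∪ q.2) hU q.1 Finset.subset_union_left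
    refine Prod.ext hm1 ?_
    show (Finset.univ.filter _)ᶜ.map _ = q.2
    have hd1 : Disjoint ((Finset.univ.filter
          (fun a => (q.1 ∪ q.2).orderEmbOfFin hU a ∈ q.1)).map
        ⟨⇑((q.1 ∪ q.2).orderEmbOfFin hU), ((q.1 ∪ q.2).orderEmbOfFin hU).injective⟩)
        ((Finset.univ.filter (fun a => (q.1 ∪ q.2).orderEmbOfFin hU a ∈ q.1))ᶜ.map
        ⟨⇑((q.1 ∪ q.2).orderEmbOfFin hU), ((q.1 ∪ q.2).orderEmbOfFin hU).injective⟩) :=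
      (Finset.disjoint_map _).mpr disjoint_compl_right
    rw [hm1] at hd1
    apply union_cancel q.1 _ _ _ hd1 h3
    calc q.1 ∪ (Finset.univ.filter (fun a => (q.1 ∪ q.2).orderEmbOfFin hU a ∈ q.1))ᶜ.map
          ⟨⇑((q.1 ∪ q.2).orderEmbOfFin hU), ((q.1 ∪ q.2).orderEmbOfFin hU).injective⟩
        = (Finset.univ.filter (fun a => (q.1 ∪ q.2).orderEmbOfFin hU a ∈ q.1)).map
            ⟨⇑((q.1 ∪ q.2).orderEmbOfFin hU), ((q.1 ∪ q.2).orderEmbOfFin hU).injective⟩ ∪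
          (Finset.univ.filter (fun a => (q.1 ∪ q.2).orderEmbOfFin hU a ∈ q.1))ᶜ.map
            ⟨⇑((q.1 ∪ q.2).orderEmbOfFin hU), ((q.1 ∪ q.2).orderEmbOfFin hU).injective⟩ := by
          rw [hm1]
      _ = Finset.univ.map
            ⟨⇑((q.1 ∪ q.2).orderEmbOfFin hU), ((q.1 ∪ q.2).orderEmbOfFin hU).injective⟩ := by
          rw [← Finset.map_union, Finset.union_compl]
      _ = q.1 ∪ q.2 := univ_map_orderEmb _ hU
  · -- summand equality
    intro p hp
    obtain ⟨-, h1, h2⟩ := Finset.mem_filter.mp hp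
    dsimp only
    rw [dif_pos h1, dif_pos h2, dif_pos (show _ ∧ _ ∧ _ from
      ⟨by rw [Finset.card_map, h1], by rw [Finset.card_map, cardCompl p.1 h1],
        (Finset.disjoint_map _).mpr disjoint_compl_right⟩)]
    rw [assocL W₁ W₂ W₃ p.1 h1 p.2 h2]

lemma sumR {d : ℕ} (R : Type) [CommRing R] (W₁ W₂ W₃ : RawWord d) :
    (∑ T : Finset (Fin (W₂.len + W₃.len)),
        ∑ T' : Finset (Fin (W₁.len + (W₂.len + W₃.len))),
          (if hT : T.card = W₂.len then
            (if hT' : T'.card = W₁.len then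
              Finsupp.single (shufW W₁ (shufW W₂ W₃ T hT) T' hT') (1 : R) else 0) else 0))
      = T3 R W₁ W₂ W₃ (W₁.len + (W₂.len + W₃.len)) (add_assoc W₁.len W₂.len W₃.len).symm := by
  classical
  rw [← Finset.sum_product', T3]
  rw [← Finset.sum_filter_of_ne (p := fun p : Finset (Fin (W₂.len + W₃.len)) ×
      Finset (Fin (W₁.len + (W₂.len + W₃.len))) =>
      p.1.card = W₂.len ∧ p.2.card = W₁.len)
    (by
      intro p _ hne
      by_cases h1 : p.1.card = W₂.len
      · by_cases h2 : p.2.card = W₁.len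
        · exact ⟨h1, h2⟩
        · exact absurd (by rw [dif_pos h1, dif_neg h2]) hne
      · exact absurd (dif_neg h1) hne)]
  rw [← Finset.sum_filter_of_ne (p := fun q : Finset (Fin (W₁.len + (W₂.len + W₃.len))) ×
      Finset (Fin (W₁.len + (W₂.len + W₃.len))) =>
      q.1.card = W₁.len ∧ q.2.card = W₂.len ∧ Disjoint q.1 q.2)
    (by
      intro q _ hne
      by_cases h1 : q.1.card = W₁.len ∧ q.2.card = W₂.len ∧ Disjoint q.1 q.2
      · exact h1
      · exact absurd (dif_neg h1) hne)]
  refine Finset.sum_bij'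
    (i := fun p hp =>
      (p.2, p.1.map ⟨⇑(p.2ᶜ.orderEmbOfFin (cardCompl p.2 (Finset.mem_filter.mp hp).2.2)),
        (p.2ᶜ.orderEmbOfFin (cardCompl p.2 (Finset.mem_filter.mp hp).2.2)).injective⟩))
    (j := fun q hq =>
      (Finset.univ.filter (fun a => q.1ᶜ.orderEmbOfFin
          (cardCompl q.1 (Finset.mem_filter.mp hq).2.1) a ∈ q.2), q.1))
    ?_ ?_ ?_ ?_ ?_
  · -- hi
    intro p hp
    obtain ⟨-, h1, h2⟩ := Finset.mem_filter.mp hp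
    refine Finset.mem_filter.mpr ⟨Finset.mem_univ _, h2, ?_, ?_⟩
    · rw [Finset.card_map, h1]
    · rw [Finset.disjoint_right]
      intro x hx
      rcases Finset.mem_map.mp hx with ⟨b, _, rfl⟩
      exact Finset.mem_compl.mp (Finset.orderEmbOfFin_mem p.2ᶜ (cardCompl p.2 h2) b)
  · -- hj
    intro q hq
    obtain ⟨-, h1, h2, h3⟩ := Finset.mem_filter.mp hq
    have hBsub : q.2 ⊆ q.1ᶜ := fun x hx =>
      Finset.mem_compl.mpr (Finset.disjoint_right.mp h3 hx)
    have hm := filter_map_emb q.1ᶜ (cardCompl q.1 h1) q.2 hBsub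
    refine Finset.mem_filter.mpr ⟨Finset.mem_univ _, ?_, h1⟩
    calc (Finset.univ.filter (fun a => q.1ᶜ.orderEmbOfFin (cardCompl q.1 h1) a ∈ q.2)).card
        = ((Finset.univ.filter (fun a => q.1ᶜ.orderEmbOfFin (cardCompl q.1 h1) a ∈ q.2)).map
            ⟨⇑(q.1ᶜ.orderEmbOfFin (cardCompl q.1 h1)),
              (q.1ᶜ.orderEmbOfFin (cardCompl q.1 h1)).injective⟩).card := by
          rw [Finset.card_map]
      _ = q.2.card := by rw [hm]
      _ = W₂.len := h2
  · -- left_inv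
    intro p hp
    obtain ⟨-, h1, h2⟩ := Finset.mem_filter.mp hp
    refine Prod.ext ?_ rfl
    show Finset.univ.filter _ = p.1
    ext a
    simp only [Finset.mem_filter, Finset.mem_univ, true_and]
    exact Finset.mem_map' _
  · -- right_inv
    intro q hq
    obtain ⟨-, h1, h2, h3⟩ := Finset.mem_filter.mp hq
    have hBsub : q.2 ⊆ q.1ᶜ := fun x hx =>
      Finset.mem_compl.mpr (Finset.disjoint_right.mp h3 hx)
    have hm := filter_map_emb q.1ᶜ (cardCompl q.1 h1) q.2 hBsub
    exact Prod.ext rfl hm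
  · -- summand equality
    intro p hp
    obtain ⟨-, h1, h2⟩ := Finset.mem_filter.mp hp
    dsimp only
    rw [dif_pos h1, dif_pos h2, dif_pos (show _ ∧ _ ∧ _ from
      ⟨h2, by rw [Finset.card_map, h1], by
        rw [Finset.disjoint_right]
        intro x hx
        rcases Finset.mem_map.mp hx with ⟨b, _, rfl⟩
        exact Finset.mem_compl.mp (Finset.orderEmbOfFin_mem p.2ᶜ (cardCompl p.2 h2) b)⟩)]
    rw [assocR W₁ W₂ W₃ p.1 h1 p.2 h2]

lemma keyAssoc {d : ℕ} (R : Type) [CommRing R] (W₁ W₂ W₃ : RawWord d) :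
    Bmul R (shufP R W₁ W₂) (Finsupp.single W₃ (1 : R)) =
      Bmul R (Finsupp.single W₁ (1 : R)) (shufP R W₂ W₃) := by
  rw [Bmul_shufP_single, Bmul_single_shufP, sumL, sumR,
    T3_cast R W₁ W₂ W₃ _ _ (add_assoc W₁.len W₂.len W₃.len).symm]

lemma cast_strictMono {N M : ℕ} (h : N = M) : StrictMono (Fin.cast h) :=
  fun _ _ hab => hab

lemma map_cast_univ {N M : ℕ} (h : N = M) :
    Finset.univ.map ⟨Fin.cast h, (cast_strictMono h).injective⟩ = Finset.univ :=
  Finset.eq_univ_of_card _ (by simp [h])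

lemma compl_map_cast {N M : ℕ} (h : N = M) (S : Finset (Fin N)) :
    (Sᶜ.map ⟨Fin.cast h, (cast_strictMono h).injective⟩)ᶜ =
      S.map ⟨Fin.cast h, (cast_strictMono h).injective⟩ := by
  apply compl_eq_of_union
  · rw [← Finset.map_union, Finset.union_comm, Finset.union_compl, map_cast_univ]
  · exact (Finset.disjoint_map _).mpr disjoint_compl_left

lemma commW {d : ℕ} (W₁ W₂ : RawWord d) (S : Finset (Fin (W₁.len + W₂.len)))
    (hS : S.card = W₁.len) :
    shufW W₁ W₂ S hS = shufW W₂ W₁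
      (Sᶜ.map ⟨Fin.cast (add_comm W₁.len W₂.len),
        (cast_strictMono (add_comm W₁.len W₂.len)).injective⟩)
      (by rw [Finset.card_map, cardCompl S hS]) := by
  set h12 := add_comm W₁.len W₂.len
  set e : Fin (W₁.len + W₂.len) ↪ Fin (W₂.len + W₁.len) :=
    ⟨Fin.cast h12, (cast_strictMono h12).injective⟩ with he
  set T := Sᶜ.map e with hT'
  have hT : T.card = W₂.len := by rw [hT', Finset.card_map, cardCompl S hS]
  have hTc : Tᶜ = S.map e := compl_map_cast h12 S
  have hSc : (S.map e).card = W₁.len := by rw [Finset.card_map, hS]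
  have eqT : ∀ a, T.orderEmbOfFin hT a =
      Fin.cast h12 (Sᶜ.orderEmbOfFin (cardCompl S hS) a) :=
    fun a => orderEmb_map_comp Sᶜ (cardCompl S hS) (cast_strictMono h12) _ a
  have eqTc : ∀ a, Tᶜ.orderEmbOfFin (cardCompl T hT) a =
      Fin.cast h12 (S.orderEmbOfFin hS a) := by
    intro a
    rw [orderEmb_congr hTc (cardCompl T hT) hSc]
    exact orderEmb_map_comp S hS (cast_strictMono h12) _ a
  refine RawWord.extCast _ _ h12 ?_ ?_ ?_
  · intro k
    by_cases hk : k ∈ S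
    · obtain ⟨a, ha⟩ := exists_emb hS hk
      have h1 : (shufW W₁ W₂ S hS).letter k = W₁.letter a := by
        rw [← ha]; exact shufW_letter₁ W₁ W₂ S hS a
      have h2 : (shufW W₂ W₁ T hT).letter (Fin.cast h12 k) = W₁.letter a := by
        have hk₁ : Tᶜ.orderEmbOfFin (cardCompl T hT) a = Fin.cast h12 k := by
          rw [eqTc a, ha]
        erw [← hk₁]; exact shufW_letter₂ W₂ W₁ T hT a
      erw [h1, h2]
    · obtain ⟨a, ha⟩ := exists_emb (cardCompl S hS) (Finset.mem_compl.mpr hk)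
      have h1 : (shufW W₁ W₂ S hS).letter k = W₂.letter a := by
        rw [← ha]; exact shufW_letter₂ W₁ W₂ S hS a
      have h2 : (shufW W₂ W₁ T hT).letter (Fin.cast h12 k) = W₂.letter a := by
        have hk₁ : T.orderEmbOfFin hT a = Fin.cast h12 k := by rw [eqT a, ha]
        erw [← hk₁]; exact shufW_letter₁ W₂ W₁ T hT a
      erw [h1, h2]
  · show embS T hT '' W₂.tag ∪ embS Tᶜ (cardCompl T hT) '' W₁.tag =
      Fin.cast h12 '' (embS S hS '' W₁.tag ∪ embS Sᶜ (cardCompl S hS) '' W₂.tag)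
    rw [Set.image_union, ← Set.image_comp, ← Set.image_comp]
    have e1 : embS Tᶜ (cardCompl T hT) = (Fin.cast h12) ∘ (embS S hS) :=
      funext fun a => eqTc a
    have e2 : embS T hT = (Fin.cast h12) ∘ (embS Sᶜ (cardCompl S hS)) :=
      funext fun a => eqT a
    rw [e1, e2, Set.union_comm]
  · show (Set.image (embS T hT)) '' W₂.blocks ∪
        (Set.image (embS Tᶜ (cardCompl T hT))) '' W₁.blocks =
      Set.image (Fin.cast h12) ''
        ((Set.image (embS S hS)) '' W₁.blocks ∪
          (Set.image (embS Sᶜ (cardCompl S hS))) '' W₂.blocks)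
    rw [Set.image_union, ← image_image_comp, ← image_image_comp]
    have e1 : embS Tᶜ (cardCompl T hT) = fun a => (Fin.cast h12) ((embS S hS) a) :=
      funext fun a => eqTc a
    have e2 : embS T hT = fun a => (Fin.cast h12) ((embS Sᶜ (cardCompl S hS)) a) :=
      funext fun a => eqT a
    rw [e1, e2, Set.union_comm]

lemma map_cast_cast {N M : ℕ} (h : N = M) (S : Finset (Fin N)) :
    (S.map ⟨Fin.cast h, (cast_strictMono h).injective⟩).map
      ⟨Fin.cast h.symm, (cast_strictMono h.symm).injective⟩ = S := by
  ext x
  simp only [Finset.mem_map, Function.Embedding.coeFn_mk]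
  constructor
  · rintro ⟨y, ⟨a, ha, rfl⟩, rfl⟩
    have : Fin.cast h.symm (Fin.cast h a) = a := by ext; rfl
    rwa [this]
  · intro hx
    exact ⟨Fin.cast h x, ⟨x, hx, rfl⟩, by ext; rfl⟩

lemma shufP_comm {d : ℕ} (R : Type) [CommRing R] (W₁ W₂ : RawWord d) :
    shufP R W₁ W₂ = shufP R W₂ W₁ := by
  classical
  rw [shufP, shufP]
  refine Finset.sum_bij'
    (i := fun S _ => Sᶜ.map ⟨Fin.cast (add_comm W₁.len W₂.len),
      (cast_strictMono (add_comm W₁.len W₂.len)).injective⟩)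
    (j := fun T _ => Tᶜ.map ⟨Fin.cast (add_comm W₂.len W₁.len),
      (cast_strictMono (add_comm W₂.len W₁.len)).injective⟩)
    (fun _ _ => Finset.mem_univ _) (fun _ _ => Finset.mem_univ _) ?_ ?_ ?_
  · intro S _
    rw [compl_map_cast, map_cast_cast]
  · intro T _
    rw [compl_map_cast, map_cast_cast]
  · intro S _
    by_cases hS : S.card = W₁.len
    · rw [dif_pos hS, dif_pos (show (Sᶜ.map ⟨Fin.cast (add_comm W₁.len W₂.len),
        (cast_strictMono (add_comm W₁.len W₂.len)).injective⟩).card = W₂.len by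
          rw [Finset.card_map, cardCompl S hS])]
      rw [commW W₁ W₂ S hS]
    · rw [dif_neg hS, dif_neg]
      intro hcon
      apply hS
      rw [Finset.card_map, Finset.card_compl, Fintype.card_fin] at hcon
      have hle := Finset.card_le_univ S
      simp only [Finset.card_univ, Fintype.card_fin] at hle
      omega

lemma univ_orderEmb_eq {N k : ℕ} (hk : N = k)
    (h : (Finset.univ : Finset (Fin N)).card = k) (a : Fin k) :
    (Finset.univ : Finset (Fin N)).orderEmbOfFin h a = Fin.cast hk.symm a := by
  have hu := Finset.orderEmbOfFin_unique h (f := fun a : Fin k => Fin.cast hk.symm a)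
    (fun x => Finset.mem_univ _) (cast_strictMono hk.symm)
  rw [← congrFun hu a]

lemma compl_empty_orderEmb {N k : ℕ} (hk : N = k)
    (h : ((∅ : Finset (Fin N))ᶜ).card = k) (a : Fin k) :
    (∅ : Finset (Fin N))ᶜ.orderEmbOfFin h a = Fin.cast hk.symm a := by
  have hu := Finset.orderEmbOfFin_unique h (f := fun a : Fin k => Fin.cast hk.symm a)
    (fun x => Finset.mem_compl.mpr (Finset.notMem_empty _)) (cast_strictMono hk.symm)
  rw [← congrFun hu a]

lemma shufW_empty_right {d : ℕ} (W : RawWord d)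
    (h : (Finset.univ : Finset (Fin (W.len + (emptyW d).len))).card = W.len) :
    shufW W (emptyW d) Finset.univ h = W := by
  have h0 : W.len + (emptyW d).len = W.len := rfl
  refine RawWord.extCast _ _ rfl ?_ ?_ ?_
  · intro k
    show (if hk : k ∈ Finset.univ then _ else _) = _
    rw [dif_pos (Finset.mem_univ k)]
    have ha : (Finset.univ : Finset (Fin (W.len + (emptyW d).len))).orderEmbOfFin h
        (Fin.cast rfl k) = k := by
      rw [univ_orderEmb_eq h0 h]; ext; rfl
    rw [symm_eq h k (Finset.mem_univ k) (Fin.cast rfl k) ha]; rfl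
  · show W.tag = Fin.cast rfl '' (embS Finset.univ h '' W.tag ∪
      embS (Finset.univ : Finset (Fin (W.len + (emptyW d).len)))ᶜ _ '' (emptyW d).tag)
    have ht : (emptyW d).tag = ∅ := rfl
    rw [ht, Set.image_empty, Set.union_empty, ← Set.image_comp]
    have hfun : (Fin.cast (rfl : (shufW W (emptyW d) Finset.univ h).len =
        (shufW W (emptyW d) Finset.univ h).len)) ∘ embS Finset.univ h = id := by
      funext a
      show Fin.cast _ (embS Finset.univ h a) = a
      rw [embS_eq, univ_orderEmb_eq h0 h]
      ext; rfl
    erw [hfun, Set.image_id]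
  · show W.blocks = Set.image (Fin.cast rfl) ''
      ((Set.image (embS Finset.univ h)) '' W.blocks ∪
        (Set.image (embS (Finset.univ : Finset (Fin (W.len + (emptyW d).len)))ᶜ _)) ''
          (emptyW d).blocks)
    have hb : (emptyW d).blocks = ∅ := rfl
    rw [hb, Set.image_empty, Set.union_empty, ← image_image_comp]
    have hfun : (fun a => Fin.cast (rfl : (shufW W (emptyW d) Finset.univ h).len =
        (shufW W (emptyW d) Finset.univ h).len) (embS Finset.univ h a)) = id := by
      funext a
      show Fin.cast _ (embS Finset.univ h a) = a
      rw [embS_eq, univ_orderEmb_eq h0 h]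
      ext; rfl
    erw [hfun]
    have him : (Set.image (id : Fin W.len → Fin W.len)) = id := funext fun s => Set.image_id s
    erw [him, Set.image_id]

lemma shufW_empty_left {d : ℕ} (W : RawWord d)
    (h : (∅ : Finset (Fin ((emptyW d).len + W.len))).card = (emptyW d).len) :
    shufW (emptyW d) W ∅ h = W := by
  have h0 : (emptyW d).len + W.len = W.len := Nat.zero_add _
  refine RawWord.extCast _ _ h0 ?_ ?_ ?_
  · intro k
    simp only [shufW]
    erw [dif_neg (Finset.notMem_empty k)]
    have ha : (∅ : Finset (Fin ((emptyW d).len + W.len)))ᶜ.orderEmbOfFin (cardCompl ∅ h)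
        (Fin.cast h0 k) = k := by
      rw [compl_empty_orderEmb h0]; ext; rfl
    rw [symm_eq (cardCompl ∅ h) k (Finset.mem_compl.mpr (Finset.notMem_empty k))
      (Fin.cast h0 k) ha]
  · show W.tag = Fin.cast h0 '' (embS ∅ h '' (emptyW d).tag ∪
      embS (∅ : Finset (Fin ((emptyW d).len + W.len)))ᶜ (cardCompl ∅ h) '' W.tag)
    have ht : (emptyW d).tag = ∅ := rfl
    rw [ht, Set.image_empty, Set.empty_union, ← Set.image_comp]
    have hfun : (Fin.cast h0) ∘ embS (∅ : Finset (Fin ((emptyW d).len + W.len)))ᶜ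
        (cardCompl ∅ h) = id := by
      funext a
      show Fin.cast h0 (embS _ (cardCompl ∅ h) a) = a
      rw [embS_eq, compl_empty_orderEmb h0]
      ext; rfl
    erw [hfun, Set.image_id]
  · show W.blocks = Set.image (Fin.cast h0) ''
      ((Set.image (embS ∅ h)) '' (emptyW d).blocks ∪
        (Set.image (embS (∅ : Finset (Fin ((emptyW d).len + W.len)))ᶜ (cardCompl ∅ h))) ''
          W.blocks)
    have hb : (emptyW d).blocks = ∅ := rfl
    rw [hb, Set.image_empty, Set.empty_union, ← image_image_comp]
    have hfun : (fun a => Fin.cast h0 (embS (∅ : Finset (Fin ((emptyW d).len + W.len)))ᶜ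
        (cardCompl ∅ h) a)) = id := by
      funext a
      show Fin.cast h0 (embS _ (cardCompl ∅ h) a) = a
      rw [embS_eq, compl_empty_orderEmb h0]
      ext; rfl
    erw [hfun]
    have him : (Set.image (id : Fin W.len → Fin W.len)) = id := funext fun s => Set.image_id s
    rw [him, Set.image_id]

lemma shufP_empty_right {d : ℕ} (R : Type) [CommRing R] (W : RawWord d) :
    shufP R W (emptyW d) = Finsupp.single W 1 := by
  rw [shufP]
  rw [Finset.sum_eq_single_of_mem Finset.univ (Finset.mem_univ _) (fun b _ hb => by
    rw [dif_neg]
    intro hcard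
    exact hb ((Finset.card_eq_iff_eq_univ b).mp (by rw [hcard, Fintype.card_fin]; simp [emptyW])))]
  rw [dif_pos (by rw [Finset.card_univ, Fintype.card_fin]; simp [emptyW] :
    (Finset.univ : Finset (Fin (W.len + (emptyW d).len))).card = W.len)]
  rw [shufW_empty_right]

lemma shufP_empty_left {d : ℕ} (R : Type) [CommRing R] (W : RawWord d) :
    shufP R (emptyW d) W = Finsupp.single W 1 := by
  rw [shufP]
  rw [Finset.sum_eq_single_of_mem ∅ (Finset.mem_univ _) (fun b _ hb => by
    rw [dif_neg]
    intro hcard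
    exact hb (Finset.card_eq_zero.mp hcard))]
  rw [dif_pos (show (∅ : Finset (Fin ((emptyW d).len + W.len))).card = (emptyW d).len by
    simp [emptyW]; rfl)]
  rw [shufW_empty_left]

/-- The coupled shuffle product on the module spanned by Lions words is
associative, commutative and unital with unit the empty word. -/
theorem stmt15 (d : ℕ) (R : Type) [CommRing R] :
    (∀ x y z : RawWord d →₀ R, wmul R (wmul R x y) z = wmul R x (wmul R y z)) ∧
    (∀ x y : RawWord d →₀ R, wmul R x y = wmul R y x) ∧
    (∀ x : RawWord d →₀ R,
      wmul R (Finsupp.single (emptyW d) 1) x = x ∧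
      wmul R x (Finsupp.single (emptyW d) 1) = x) := by
  refine ⟨?_, ?_, ?_⟩
  · intro x y z
    rw [wmul_eq, wmul_eq, wmul_eq, wmul_eq]
    induction x using Finsupp.induction_linear with
    | zero => simp
    | add f g hf hg => simp [map_add, LinearMap.add_apply, hf, hg]
    | single W₁ r =>
      induction y using Finsupp.induction_linear with
      | zero => simp
      | add f g hf hg => simp [map_add, LinearMap.add_apply, hf, hg]
      | single W₂ s =>
        induction z using Finsupp.induction_linear with
        | zero => simp
        | add f g hf hg => simp [map_add, LinearMap.add_apply, hf, hg]
        | single W₃ t =>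
          rw [Bmul_single_single, Bmul_single_single]
          have hz : Finsupp.single W₃ t = t • Finsupp.single W₃ (1 : R) := by
            rw [Finsupp.smul_single, smul_eq_mul, mul_one]
          have hx : Finsupp.single W₁ r = r • Finsupp.single W₁ (1 : R) := by
            rw [Finsupp.smul_single, smul_eq_mul, mul_one]
          rw [hz, hx]
          simp only [map_smul, LinearMap.smul_apply]
          rw [keyAssoc]
          simp only [smul_smul]
          congr 1
          ring
  · intro x y
    rw [wmul_eq, wmul_eq]
    induction x using Finsupp.induction_linear with
    | zero => simp
    | add f g hf hg => simp [map_add, LinearMap.add_apply, hf, hg]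
    | single W₁ r =>
      induction y using Finsupp.induction_linear with
      | zero => simp
      | add f g hf hg => simp [map_add, LinearMap.add_apply, hf, hg]
      | single W₂ s =>
        rw [Bmul_single_single, Bmul_single_single, shufP_comm, mul_comm]
  · intro x
    constructor
    · rw [wmul_eq]
      induction x using Finsupp.induction_linear with
      | zero => simp
      | add f g hf hg => simp [map_add, LinearMap.add_apply, hf, hg]
      | single W r =>
        rw [Bmul_single_single, one_mul, shufP_empty_left, Finsupp.smul_single,
          smul_eq_mul, mul_one]
    · rw [wmul_eq]
      induction x using Finsupp.induction_linear with
      | zero => simp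
      | add f g hf hg => simp [map_add, LinearMap.add_apply, hf, hg]
      | single W r =>
        rw [Bmul_single_single, mul_one, shufP_empty_right, Finsupp.smul_single,
          smul_eq_mul, mul_one]
end

section
/- For a Lions tree T and any admissible cut c of T, the prune T_c^P and the root T_c^R are Lions forests, and the original partition H^T defines a Lions coupling between them: every hyperedge of the prune not meeting a root of the prune is uncoupled. -/
open scoped Classical

/-- `P` is a partition of the subset `S`. -/
def IsPartitionOn {α : Type*} (S : Set α) (P : Set (Set α)) : Prop :=
  ∅ ∉ P ∧ (∀ p ∈ P, p ⊆ S) ∧ ∀ x ∈ S, ∃! p, p ∈ P ∧ x ∈ p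

/-- Raw data of a labelled Lions forest: a finite set of nodes (in the
universe `ℕ`), a parent map (roots are the fixed points), a tagged hyperedge
`h₀`, a collection of partition blocks, and a (partial) labelling by
`{1,…,d}`. -/
structure LForest (d : ℕ) : Type where
  nodes : Finset ℕ
  par : ℕ → ℕ
  h0 : Set ℕ
  blocks : Set (Set ℕ)
  lab : ℕ → Option (Fin d)

/-- The depth of a node: the distance to the root of its component. -/
noncomputable def fdepth {d : ℕ} (F : LForest d) (x : ℕ) : ℕ :=
  sInf {n : ℕ | F.par (F.par^[n] x) = F.par^[n] x}

/-- The hyperedges of a Lions forest: `H' = (H ∪ {h₀}) \ {∅}`. -/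
def hyper {d : ℕ} (F : LForest d) : Set (Set ℕ) :=
  (F.blocks ∪ {F.h0}) \ {(∅ : Set ℕ)}

/-- The data is an actual labelled Lions forest: `(nodes, par)` is a directed
forest (normalised with `par x = x` and `lab x = none` off the nodes, every
node labelled), `h₀` is a tagged subset, the blocks partition `nodes \ h₀`,
making the nodes a 1-regular hypergraph, and the hyperedges satisfy the Lions
conditions (2.1)–(2.3): a nonempty `h₀` contains a root; for `x, y` in a
common hyperedge with `depth x < depth y` the parent of `y` is in that
hyperedge; and equal-depth members of a common hyperedge with distinct
parents have both parents in that hyperedge. -/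
def IsLionsForest {d : ℕ} (F : LForest d) : Prop :=
  (∀ x ∈ F.nodes, F.par x ∈ F.nodes) ∧
  (∀ x : ℕ, x ∉ F.nodes → F.par x = x) ∧
  (∀ x ∈ F.nodes, ∃ n : ℕ, F.par (F.par^[n] x) = F.par^[n] x) ∧
  (∀ x : ℕ, x ∉ F.nodes → F.lab x = none) ∧
  (∀ x ∈ F.nodes, F.lab x ≠ none) ∧
  F.h0 ⊆ (↑F.nodes : Set ℕ) ∧
  IsPartitionOn ((↑F.nodes : Set ℕ) \ F.h0) F.blocks ∧
  (F.h0.Nonempty → ∃ x ∈ F.h0, F.par x = x) ∧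
  (∀ h ∈ hyper F, ∀ x ∈ h, ∀ y ∈ h,
    fdepth F x < fdepth F y → F.par y ∈ h) ∧
  (∀ h ∈ hyper F, ∀ x ∈ h, ∀ y ∈ h,
    F.par x ≠ x → F.par y ≠ y → fdepth F x = fdepth F y →
      F.par x ≠ F.par y → (F.par x ∈ h ∧ F.par y ∈ h))

/-- The trace of a collection of sets `G` on a set `S`. -/
def trace (S : Set ℕ) (G : Set (Set ℕ)) : Set (Set ℕ) :=
  {s | s.Nonempty ∧ ∃ g ∈ G, s = g ∩ S}

/-- The set of coupled partitions `P ∪̃ Q`. -/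
def coupled (M N : Set ℕ) (P Q : Set (Set ℕ)) : Set (Set (Set ℕ)) :=
  {G | IsPartitionOn (M ∪ N) G ∧ trace M G = P ∧ trace N G = Q}

/-- The set of edges of a Lions forest: each non-root node is joined to its
parent. -/
def edgesOf {d : ℕ} (F : LForest d) : Set (ℕ × ℕ) :=
  {e | e.1 ∈ F.nodes ∧ F.par e.1 ≠ e.1 ∧ e.2 = F.par e.1}

/-- `c` is an admissible cut: a set of edges such that the path from any node
to the root contains at most one edge of `c`. -/
def AdmCut {d : ℕ} (F : LForest d) (c : Set (ℕ × ℕ)) : Prop :=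
  c ⊆ edgesOf F ∧
  ∀ x ∈ F.nodes, ∀ m n : ℕ,
    (F.par^[m] x, F.par^[m + 1] x) ∈ c →
    (F.par^[n] x, F.par^[n + 1] x) ∈ c → m = n

/-- The nodes still joined to the root after removing the cut edges. -/
def rootPart {d : ℕ} (F : LForest d) (c : Set (ℕ × ℕ)) : Set ℕ :=
  {y | y ∈ F.nodes ∧ ∀ n : ℕ, (F.par^[n] y, F.par^[n + 1] y) ∉ c}

/-- The root `T_c^R` of the cut `c`: the part of the tree still joined to the
root, with traced hyperedge structure. -/
noncomputable def cutRoot {d : ℕ} (F : LForest d) (c : Set (ℕ × ℕ)) :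
    LForest d where
  nodes := F.nodes.filter (fun y => y ∈ rootPart F c)
  par := fun x => if x ∈ rootPart F c then F.par x else x
  h0 := F.h0 ∩ rootPart F c
  blocks := {s | s.Nonempty ∧ ∃ h ∈ F.blocks, s = h ∩ rootPart F c}
  lab := fun x => if x ∈ rootPart F c then F.lab x else none

/-- The prune `T_c^P` of the cut `c`: the remaining nodes, with edges of the
cut removed and traced hyperedge structure. -/
noncomputable def cutPrune {d : ℕ} (F : LForest d) (c : Set (ℕ × ℕ)) :
    LForest d where
  nodes := F.nodes.filter (fun y => y ∉ rootPart F c)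
  par := fun x =>
    if x ∈ F.nodes ∧ x ∉ rootPart F c ∧ (x, F.par x) ∉ c then F.par x else x
  h0 := F.h0 \ rootPart F c
  blocks := {s | s.Nonempty ∧ ∃ h ∈ F.blocks, s = h \ rootPart F c}
  lab := fun x => if x ∈ F.nodes ∧ x ∉ rootPart F c then F.lab x else none

section Aux

variable {d : ℕ}

lemma iter_mem_nodes (F : LForest d) (hT : IsLionsForest F) {x : ℕ}
    (hx : x ∈ F.nodes) (n : ℕ) : F.par^[n] x ∈ F.nodes := by
  induction n with
  | zero => simpa using hx
  | succ n ih => rw [Function.iterate_succ_apply']; exact hT.1 _ ih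

lemma depth_set_nonempty (F : LForest d) (hT : IsLionsForest F) {x : ℕ}
    (hx : x ∈ F.nodes) :
    {n : ℕ | F.par (F.par^[n] x) = F.par^[n] x}.Nonempty :=
  hT.2.2.1 x hx

lemma fdepth_spec (F : LForest d) (hT : IsLionsForest F) {x : ℕ}
    (hx : x ∈ F.nodes) :
    F.par (F.par^[fdepth F x] x) = F.par^[fdepth F x] x :=
  Nat.sInf_mem (depth_set_nonempty F hT hx)

lemma fdepth_le {x : ℕ} (F : LForest d) {n : ℕ}
    (h : F.par (F.par^[n] x) = F.par^[n] x) : fdepth F x ≤ n :=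
  Nat.sInf_le h

lemma fdepth_zero_iff (F : LForest d) (hT : IsLionsForest F) {x : ℕ}
    (hx : x ∈ F.nodes) : fdepth F x = 0 ↔ F.par x = x := by
  constructor
  · intro h
    have := fdepth_spec F hT hx
    rw [h] at this; simpa using this
  · intro h
    have : F.par (F.par^[0] x) = F.par^[0] x := by simpa using h
    exact Nat.le_zero.mp (fdepth_le F this)

lemma fdepth_par (F : LForest d) (hT : IsLionsForest F) {x : ℕ}
    (hx : x ∈ F.nodes) (hnr : F.par x ≠ x) :
    fdepth F x = fdepth F (F.par x) + 1 := by
  have hpos : 1 ≤ fdepth F x := by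
    rcases Nat.eq_zero_or_pos (fdepth F x) with h | h
    · exact absurd ((fdepth_zero_iff F hT hx).mp h) hnr
    · exact h
  have hmem : F.par (F.par^[fdepth F x - 1] (F.par x)) =
      F.par^[fdepth F x - 1] (F.par x) := by
    have := fdepth_spec F hT hx
    rwa [show fdepth F x = (fdepth F x - 1) + 1 by omega,
      Function.iterate_succ_apply] at this
  have h1 : fdepth F (F.par x) ≤ fdepth F x - 1 := fdepth_le F hmem
  have h2 : fdepth F x ≤ fdepth F (F.par x) + 1 := by
    apply fdepth_le F
    have := fdepth_spec F hT (hT.1 x hx)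
    rwa [← Function.iterate_succ_apply] at this
  omega

lemma fdepth_iterate (F : LForest d) (hT : IsLionsForest F) {x : ℕ}
    (hx : x ∈ F.nodes) {j : ℕ} (hj : j ≤ fdepth F x) :
    fdepth F (F.par^[j] x) = fdepth F x - j := by
  induction j with
  | zero => simp
  | succ j ih =>
    have hj' : j ≤ fdepth F x := by omega
    have ihd := ih hj'
    have hnode : F.par^[j] x ∈ F.nodes := iter_mem_nodes F hT hx j
    have hnr : F.par (F.par^[j] x) ≠ F.par^[j] x := by
      intro h
      have : fdepth F (F.par^[j] x) = 0 := (fdepth_zero_iff F hT hnode).mpr h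
      omega
    have := fdepth_par F hT hnode hnr
    rw [Function.iterate_succ_apply']
    omega

lemma iterate_stable (F : LForest d) (hT : IsLionsForest F) {x : ℕ}
    (hx : x ∈ F.nodes) {n : ℕ} (hn : fdepth F x ≤ n) :
    F.par^[n] x = F.par^[fdepth F x] x := by
  induction n with
  | zero => have : fdepth F x = 0 := by omega
            rw [this]
  | succ n ih =>
    rcases Nat.lt_or_ge (fdepth F x) (n+1) with h | h
    · have hd : fdepth F x ≤ n := by omega
      rw [Function.iterate_succ_apply', ih hd, fdepth_spec F hT hx]
    · have : fdepth F x = n + 1 := by omega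
      rw [this]

end Aux
section Cut

variable {d : ℕ} (T : LForest d) (c : Set (ℕ × ℕ))

lemma rootPart_subset_nodes : rootPart T c ⊆ ↑T.nodes := fun _ h => h.1

lemma rootPart_par_closed (hT : IsLionsForest T) {x : ℕ}
    (hx : x ∈ rootPart T c) : T.par x ∈ rootPart T c := by
  refine ⟨hT.1 x hx.1, fun n => ?_⟩
  have := hx.2 (n + 1)
  rwa [Function.iterate_succ_apply, Function.iterate_succ_apply] at this

lemma rootPart_iter_closed (hT : IsLionsForest T) {x : ℕ}
    (hx : x ∈ rootPart T c) (n : ℕ) : T.par^[n] x ∈ rootPart T c := by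
  induction n with
  | zero => simpa using hx
  | succ n ih => rw [Function.iterate_succ_apply']
                 exact rootPart_par_closed T c hT ih

lemma root_mem_rootPart (hc : AdmCut T c) {x : ℕ} (hx : x ∈ T.nodes)
    (hr : T.par x = x) : x ∈ rootPart T c := by
  refine ⟨hx, fun n hn => ?_⟩
  have hfix : ∀ m, T.par^[m] x = x := fun m => Function.iterate_fixed hr m
  rw [hfix n, hfix (n+1)] at hn
  exact (hc.1 hn).2.1 hr

lemma cut_nonroot (hc : AdmCut T c) {x K : ℕ}
    (hK : (T.par^[K] x, T.par^[K+1] x) ∈ c) : T.par x ≠ x := by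
  intro hr
  have hfix : ∀ m, T.par^[m] x = x := fun m => Function.iterate_fixed hr m
  rw [hfix K, hfix (K+1)] at hK
  exact (hc.1 hK).2.1 hr

lemma notR_exists_cut {x : ℕ} (hx : x ∈ T.nodes) (hxR : x ∉ rootPart T c) :
    ∃ K, (T.par^[K] x, T.par^[K+1] x) ∈ c := by
  by_contra h
  push_neg at h
  exact hxR ⟨hx, h⟩

lemma cut_shift {x K : ℕ} (hK : (T.par^[K] x, T.par^[K+1] x) ∈ c)
    {j : ℕ} (hj : j ≤ K) :
    (T.par^[K-j] (T.par^[j] x), T.par^[(K-j)+1] (T.par^[j] x)) ∈ c := by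
  rw [← Function.iterate_add_apply, ← Function.iterate_add_apply,
    show K - j + j = K by omega, show K - j + 1 + j = K + 1 by omega]
  exact hK

lemma cut_anc_notR (hT : IsLionsForest T) {x K : ℕ} (hx : x ∈ T.nodes)
    (hK : (T.par^[K] x, T.par^[K+1] x) ∈ c) {j : ℕ} (hj : j ≤ K) :
    T.par^[j] x ∉ rootPart T c := by
  intro hR
  exact hR.2 (K - j) (cut_shift T c hK hj)

lemma cut_anc_R (hT : IsLionsForest T) (hc : AdmCut T c) {x K : ℕ}
    (hx : x ∈ T.nodes) (hK : (T.par^[K] x, T.par^[K+1] x) ∈ c)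
    {j : ℕ} (hj : K < j) : T.par^[j] x ∈ rootPart T c := by
  refine ⟨iter_mem_nodes T hT hx j, fun m hm => ?_⟩
  rw [← Function.iterate_add_apply, ← Function.iterate_add_apply,
    show m + 1 + j = (m + j) + 1 by omega] at hm
  have := hc.2 x hx (m + j) K hm hK
  omega

lemma cut_lt_depth (hT : IsLionsForest T) (hc : AdmCut T c) {x K : ℕ}
    (hx : x ∈ T.nodes) (hK : (T.par^[K] x, T.par^[K+1] x) ∈ c) :
    K < fdepth T x := by
  by_contra h
  push_neg at h
  have h1 : T.par^[K] x = T.par^[fdepth T x] x := iterate_stable T hT hx h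
  have h2 : T.par^[K+1] x = T.par^[fdepth T x] x :=
    iterate_stable T hT hx (by omega)
  have := (hc.1 hK).2.1
  rw [h1, h2] at this
  exact this (fdepth_spec T hT hx)

lemma cut_unique (hc : AdmCut T c) {x m n : ℕ} (hx : x ∈ T.nodes)
    (hm : (T.par^[m] x, T.par^[m+1] x) ∈ c)
    (hn : (T.par^[n] x, T.par^[n+1] x) ∈ c) : m = n :=
  hc.2 x hx m n hm hn

end Cut
section Hyper

variable {d : ℕ} (T : LForest d) (c : Set (ℕ × ℕ))

lemma hyper_subset_nodes (hT : IsLionsForest T) {h : Set ℕ}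
    (hh : h ∈ hyper T) : h ⊆ ↑T.nodes := by
  rcases hh.1 with hb | h0
  · exact fun x hx => ((hT.2.2.2.2.2.2.1).2.1 h hb hx).1
  · rw [Set.mem_singleton_iff] at h0
    rw [h0]; exact hT.2.2.2.2.2.1

lemma same_parent_same_cut (hc : AdmCut T c) {x y Kx Ky : ℕ}
    (hx : x ∈ T.nodes)
    (hp : T.par x = T.par y)
    (hKx : (T.par^[Kx] x, T.par^[Kx+1] x) ∈ c)
    (hKy : (T.par^[Ky] y, T.par^[Ky+1] y) ∈ c) : Kx = Ky := by
  have key : ∀ m : ℕ, 1 ≤ m → T.par^[m] y = T.par^[m] x := by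
    intro m hm
    rw [show m = (m - 1) + 1 by omega, Function.iterate_succ_apply,
      Function.iterate_succ_apply, hp]
  rcases Nat.eq_zero_or_pos Ky with h0 | hpos
  · subst h0
    rcases Nat.eq_zero_or_pos Kx with h0' | hpos'
    · omega
    · -- (y, par y) ∈ c, transfer x's edge Kx ≥ 1 to y's path impossible?
      -- Instead: transfer y's edge? edge 0 of y is (y, par y); can't move to x.
      -- Use x's admissibility after transferring y's edge 1.. no.
      -- Transfer edge Kx of x to y: x's edge at Kx (Kx ≥ 1) equals y's edge at Kx.
      have hKx' : (T.par^[Kx] y, T.par^[Kx+1] y) ∈ c := by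
        rw [key Kx hpos', key (Kx+1) (by omega)]; exact hKx
      -- now y has edges at 0 and Kx; need y ∈ nodes
      have hy : y ∈ T.nodes := (hc.1 hKy).1
      exact (hc.2 y hy Kx 0 hKx' hKy).symm ▸ rfl
  · have hKy' : (T.par^[Ky] x, T.par^[Ky+1] x) ∈ c := by
      rw [← key Ky hpos, ← key (Ky+1) (by omega)]; exact hKy
    exact hc.2 x hx Kx Ky hKx hKy'

lemma lions_eq_depth (hT : IsLionsForest T) (hc : AdmCut T c) {h : Set ℕ}
    (hh : h ∈ hyper T) {x y Kx Ky : ℕ} (hxh : x ∈ h) (hyh : y ∈ h)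
    (hd : fdepth T x = fdepth T y)
    (hKx : (T.par^[Kx] x, T.par^[Kx+1] x) ∈ c)
    (hKy : (T.par^[Ky] y, T.par^[Ky+1] y) ∈ c)
    (hne : Kx ≠ Ky) : T.par x ∈ h ∧ T.par y ∈ h := by
  have hxn : x ∈ T.nodes := hyper_subset_nodes T hT hh hxh
  have hxnr : T.par x ≠ x := cut_nonroot T c hc hKx
  have hynr : T.par y ≠ y := cut_nonroot T c hc hKy
  have hpp : T.par x ≠ T.par y := by
    intro heq
    exact hne (same_parent_same_cut T c hc hxn heq hKx hKy)
  exact hT.2.2.2.2.2.2.2.2.2 h hh x hxh y hyh hxnr hynr hd hpp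

lemma lions_descend (hT : IsLionsForest T) {h : Set ℕ} (hh : h ∈ hyper T)
    {z u : ℕ} (hz : z ∈ h) (hu : u ∈ h) (j : ℕ)
    (hj : j + fdepth T z ≤ fdepth T u) : T.par^[j] u ∈ h := by
  have hun : u ∈ T.nodes := hyper_subset_nodes T hT hh hu
  induction j with
  | zero => simpa using hu
  | succ j ih =>
    have hv : T.par^[j] u ∈ h := ih (by omega)
    have hdv : fdepth T (T.par^[j] u) = fdepth T u - j :=
      fdepth_iterate T hT hun (by omega)
    have hlt : fdepth T z < fdepth T (T.par^[j] u) := by omega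
    rw [Function.iterate_succ_apply']
    exact hT.2.2.2.2.2.2.2.2.1 h hh z hz _ hv hlt

/-- Key lemma (E): if a hyperedge contains a point of the root part, then the
parent of any member with a cut strictly above it stays in the hyperedge. -/
lemma lemmaE (hT : IsLionsForest T) (hc : AdmCut T c) {h : Set ℕ}
    (hh : h ∈ hyper T) {z u Ku : ℕ} (hz : z ∈ h) (hzR : z ∈ rootPart T c)
    (hu : u ∈ h) (hKu : (T.par^[Ku] u, T.par^[Ku+1] u) ∈ c) (hKu1 : 1 ≤ Ku) :
    T.par u ∈ h := by
  have hun : u ∈ T.nodes := hyper_subset_nodes T hT hh hu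
  generalize hN : fdepth T z = N
  induction N using Nat.strong_induction_on generalizing z with
  | _ N ih =>
    have hzn : z ∈ T.nodes := hzR.1
    rcases lt_trichotomy (fdepth T z) (fdepth T u) with hlt | heq | hgt
    · exact hT.2.2.2.2.2.2.2.2.1 h hh z hz u hu hlt
    · have hunr : T.par u ≠ u := cut_nonroot T c hc hKu
      have hznr : T.par z ≠ z := by
        intro hr
        have : fdepth T z = 0 := (fdepth_zero_iff T hT hzn).mpr hr
        have : fdepth T u ≠ 0 := fun h0 =>
          hunr ((fdepth_zero_iff T hT hun).mp h0)
        have hKlt := cut_lt_depth T c hT hc hun hKu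
        omega
      have hpp : T.par z ≠ T.par u := by
        intro heq'
        have key : ∀ m, 1 ≤ m → T.par^[m] z = T.par^[m] u := by
          intro m hm
          rw [show m = (m-1)+1 by omega, Function.iterate_succ_apply,
            Function.iterate_succ_apply, heq']
        have : (T.par^[Ku] z, T.par^[Ku+1] z) ∈ c := by
          rw [key Ku hKu1, key (Ku+1) (by omega)]; exact hKu
        exact hzR.2 Ku this
      exact (hT.2.2.2.2.2.2.2.2.2 h hh z hz u hu hznr hunr heq hpp).2
    · have hznr : T.par z ≠ z := by
        intro hr
        have : fdepth T z = 0 := (fdepth_zero_iff T hT hzn).mpr hr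
        omega
      have hpz : T.par z ∈ h := hT.2.2.2.2.2.2.2.2.1 h hh u hu z hz hgt
      have hpzR : T.par z ∈ rootPart T c := rootPart_par_closed T c hT hzR
      have hd : fdepth T (T.par z) = fdepth T z - 1 := by
        have := fdepth_par T hT hzn hznr; omega
      exact ih (fdepth T (T.par z)) (by omega) hpz hpzR rfl

end Hyper
section CutForests

variable {d : ℕ} (T : LForest d) (c : Set (ℕ × ℕ))

lemma cutRoot_nodes_coe :
    (↑(cutRoot T c).nodes : Set ℕ) = rootPart T c := by
  ext x
  simp only [cutRoot, Finset.coe_filter, Set.mem_setOf_eq]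
  exact ⟨fun h => h.2, fun h => ⟨h.1, h⟩⟩

lemma cutPrune_nodes_coe :
    (↑(cutPrune T c).nodes : Set ℕ) = (↑T.nodes : Set ℕ) \ rootPart T c := by
  ext x
  simp only [cutPrune, Finset.coe_filter, Set.mem_setOf_eq, Set.mem_diff,
    Finset.mem_coe]

lemma cutRoot_iter (hT : IsLionsForest T) {x : ℕ} (hx : x ∈ rootPart T c)
    (n : ℕ) : (cutRoot T c).par^[n] x = T.par^[n] x := by
  induction n with
  | zero => rfl
  | succ n ih =>
    rw [Function.iterate_succ_apply', Function.iterate_succ_apply', ih]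
    have : T.par^[n] x ∈ rootPart T c := rootPart_iter_closed T c hT hx n
    simp only [cutRoot, if_pos this]

lemma cutRoot_fdepth (hT : IsLionsForest T) {x : ℕ} (hx : x ∈ rootPart T c) :
    fdepth (cutRoot T c) x = fdepth T x := by
  unfold fdepth
  congr 1
  ext n
  have h1 := cutRoot_iter T c hT hx n
  have h2 : T.par^[n] x ∈ rootPart T c := rootPart_iter_closed T c hT hx n
  have h3 : (cutRoot T c).par (T.par^[n] x) = T.par (T.par^[n] x) := by
    simp only [cutRoot]; rw [if_pos h2]
  rw [Set.mem_setOf_eq, Set.mem_setOf_eq, h1, h3]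

lemma cutPrune_iter (hT : IsLionsForest T) (hc : AdmCut T c) {x K : ℕ}
    (hx : x ∈ T.nodes) (hK : (T.par^[K] x, T.par^[K+1] x) ∈ c)
    {n : ℕ} (hn : n ≤ K) : (cutPrune T c).par^[n] x = T.par^[n] x := by
  induction n with
  | zero => rfl
  | succ n ih =>
    rw [Function.iterate_succ_apply', Function.iterate_succ_apply',
      ih (by omega)]
    have h1 : T.par^[n] x ∈ T.nodes := iter_mem_nodes T hT hx n
    have h2 : T.par^[n] x ∉ rootPart T c := cut_anc_notR T c hT hx hK (by omega)
    have h3 : (T.par^[n] x, T.par (T.par^[n] x)) ∉ c := by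
      intro hmem
      have hmem' : (T.par^[n] x, T.par^[n+1] x) ∈ c := by
        rw [Function.iterate_succ_apply']; exact hmem
      have := cut_unique T c hc hx hmem' hK
      omega
    show (cutPrune T c).par (T.par^[n] x) = T.par (T.par^[n] x)
    simp only [cutPrune]
    rw [if_pos ⟨h1, h2, h3⟩]

lemma cutPrune_fdepth (hT : IsLionsForest T) (hc : AdmCut T c) {x K : ℕ}
    (hx : x ∈ T.nodes) (hK : (T.par^[K] x, T.par^[K+1] x) ∈ c) :
    fdepth (cutPrune T c) x = K := by
  have hKd : K < fdepth T x := cut_lt_depth T c hT hc hx hK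
  have hmem : (cutPrune T c).par ((cutPrune T c).par^[K] x)
      = (cutPrune T c).par^[K] x := by
    rw [cutPrune_iter T c hT hc hx hK (le_refl K)]
    have hcc : (T.par^[K] x, T.par (T.par^[K] x)) ∈ c := by
      have : T.par^[K+1] x = T.par (T.par^[K] x) := Function.iterate_succ_apply' _ _ _
      rw [← this]; exact hK
    simp only [cutPrune]
    rw [if_neg]
    rintro ⟨-, -, hcon⟩
    exact hcon hcc
  refine le_antisymm (fdepth_le _ hmem) ?_
  unfold fdepth
  refine le_csInf ⟨K, hmem⟩ ?_
  intro n hn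
  by_contra hlt
  push_neg at hlt
  have hn' : n ≤ K := by omega
  rw [Set.mem_setOf_eq, cutPrune_iter T c hT hc hx hK hn'] at hn
  have h1 : T.par^[n] x ∈ T.nodes := iter_mem_nodes T hT hx n
  have h2 : T.par^[n] x ∉ rootPart T c := cut_anc_notR T c hT hx hK (by omega)
  have h3 : (T.par^[n] x, T.par (T.par^[n] x)) ∉ c := by
    intro hmem'
    have hmem2 : (T.par^[n] x, T.par^[n+1] x) ∈ c := by
      rw [Function.iterate_succ_apply']; exact hmem'
    have := cut_unique T c hc hx hmem2 hK
    omega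
  simp only [cutPrune] at hn
  rw [if_pos ⟨h1, h2, h3⟩] at hn
  -- hn : T.par (T.par^[n] x) = T.par^[n] x, but n < fdepth T x
  have := fdepth_le T hn
  omega

end CutForests

section Partition

lemma trace_partition {S M : Set ℕ} {P : Set (Set ℕ)}
    (hP : IsPartitionOn S P) : IsPartitionOn (S ∩ M) (trace M P) := by
  obtain ⟨hne, hsub, huniq⟩ := hP
  refine ⟨?_, ?_, ?_⟩
  · rintro ⟨hne', -⟩
    exact hne'.ne_empty rfl
  · rintro p ⟨-, g, hg, rfl⟩
    exact Set.inter_subset_inter_left M (hsub g hg)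
  · rintro x ⟨hxS, hxM⟩
    obtain ⟨p, ⟨hp, hxp⟩, hu⟩ := huniq x hxS
    refine ⟨p ∩ M, ⟨⟨⟨x, hxp, hxM⟩, p, hp, rfl⟩, hxp, hxM⟩, ?_⟩
    rintro q ⟨⟨-, g, hg, rfl⟩, hxg, -⟩
    rw [hu g ⟨hg, hxg⟩]

end Partition
section More

variable {d : ℕ} (T : LForest d) (c : Set (ℕ × ℕ))

lemma h0_mem_hyper (hne : T.h0.Nonempty) :
    T.h0 ∈ hyper T :=
  ⟨Or.inr rfl, by simpa using hne.ne_empty⟩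

lemma h0_anc (hT : IsLionsForest T) {u : ℕ} (hu : u ∈ T.h0)
    (hnr : T.par u ≠ u) : T.par u ∈ T.h0 := by
  have hne : T.h0.Nonempty := ⟨u, hu⟩
  obtain ⟨x0, hx0, hx0r⟩ := hT.2.2.2.2.2.2.2.1 hne
  have hx0n : x0 ∈ T.nodes := hT.2.2.2.2.2.1 hx0
  have hun : u ∈ T.nodes := hT.2.2.2.2.2.1 hu
  have hd0 : fdepth T x0 = 0 := (fdepth_zero_iff T hT hx0n).mpr hx0r
  have hdu : fdepth T u ≠ 0 := fun h => hnr ((fdepth_zero_iff T hT hun).mp h)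
  exact hT.2.2.2.2.2.2.2.2.1 T.h0 (h0_mem_hyper T hne) x0 hx0 u hu
    (by omega)

lemma hyper_prune_src {h' : Set ℕ} (hh' : h' ∈ hyper (cutPrune T c)) :
    h'.Nonempty ∧ ∃ h ∈ hyper T, h' = h \ rootPart T c := by
  have hne : h'.Nonempty := Set.nonempty_iff_ne_empty.mpr (by simpa using hh'.2)
  refine ⟨hne, ?_⟩
  rcases hh'.1 with hb | h0
  · obtain ⟨-, h, hb, rfl⟩ := hb
    have hhn : h ≠ ∅ := by
      rintro rfl
      simp at hne
    exact ⟨h, ⟨Or.inl hb, by simpa using hhn⟩, rfl⟩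
  · rw [Set.mem_singleton_iff] at h0
    have hne0 : T.h0.Nonempty := by
      rw [h0] at hne
      exact ⟨hne.choose, (hne.choose_spec).1⟩
    exact ⟨T.h0, h0_mem_hyper T hne0, h0⟩

lemma hyper_root_src {h' : Set ℕ} (hh' : h' ∈ hyper (cutRoot T c)) :
    h'.Nonempty ∧ ∃ h ∈ hyper T, h' = h ∩ rootPart T c := by
  have hne : h'.Nonempty := Set.nonempty_iff_ne_empty.mpr (by simpa using hh'.2)
  refine ⟨hne, ?_⟩
  rcases hh'.1 with hb | h0
  · obtain ⟨-, h, hb, rfl⟩ := hb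
    have hhn : h ≠ ∅ := by
      rintro rfl
      exact hne.ne_empty (by simp)
    exact ⟨h, ⟨Or.inl hb, by simpa using hhn⟩, rfl⟩
  · rw [Set.mem_singleton_iff] at h0
    have hne0 : T.h0.Nonempty := by
      rw [h0] at hne
      exact ⟨hne.choose, (hne.choose_spec).1⟩
    exact ⟨T.h0, h0_mem_hyper T hne0, h0⟩

lemma prune_key (hT : IsLionsForest T) (hc : AdmCut T c) {h : Set ℕ}
    (hh : h ∈ hyper T) {x y Kx Ky : ℕ} (hx : x ∈ h) (hy : y ∈ h)
    (hKx : (T.par^[Kx] x, T.par^[Kx+1] x) ∈ c)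
    (hKy : (T.par^[Ky] y, T.par^[Ky+1] y) ∈ c) (hKy1 : 1 ≤ Ky)
    (hcase : Kx < Ky ∨ (Kx = Ky ∧ 1 ≤ Kx ∧ T.par x ≠ T.par y)) :
    T.par y ∈ h := by
  have hxn : x ∈ T.nodes := hyper_subset_nodes T hT hh hx
  have hyn : y ∈ T.nodes := hyper_subset_nodes T hT hh hy
  rcases lt_trichotomy (fdepth T x) (fdepth T y) with hlt | heq | hgt
  · exact hT.2.2.2.2.2.2.2.2.1 h hh x hx y hy hlt
  · rcases hcase with hlt' | ⟨-, -, hpp⟩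
    · exact (lions_eq_depth T c hT hc hh hx hy heq hKx hKy (by omega)).2
    · exact (hT.2.2.2.2.2.2.2.2.2 h hh x hx y hy (cut_nonroot T c hc hKx)
        (cut_nonroot T c hc hKy) heq hpp).2
  · set Δ := fdepth T x - fdepth T y with hΔ
    have hΔ1 : 1 ≤ Δ := by omega
    have hz : T.par^[Δ] x ∈ h := lions_descend T hT hh hy hx Δ (by omega)
    have hΔle : Δ ≤ fdepth T x := by omega
    have hzd : fdepth T (T.par^[Δ] x) = fdepth T y := by
      rw [fdepth_iterate T hT hxn hΔle]; omega
    rcases Nat.lt_or_ge Kx Δ with hKΔ | hKΔ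
    · have hzR : T.par^[Δ] x ∈ rootPart T c := cut_anc_R T c hT hc hxn hKx hKΔ
      exact lemmaE T c hT hc hh hz hzR hy hKy hKy1
    · have hzc := cut_shift T c hKx hKΔ
      have hKne : Kx - Δ ≠ Ky := by
        rcases hcase with h1 | ⟨h2, -, -⟩ <;> omega
      exact (lions_eq_depth T c hT hc hh hz hy hzd hzc hKy hKne).2

end More
section Main

variable {d : ℕ} (T : LForest d) (c : Set (ℕ × ℕ))

lemma memP_iff (x : ℕ) :
    x ∈ (cutPrune T c).nodes ↔ x ∈ T.nodes ∧ x ∉ rootPart T c := by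
  simp [cutPrune]

lemma parP_pos {x : ℕ}
    (h : x ∈ T.nodes ∧ x ∉ rootPart T c ∧ (x, T.par x) ∉ c) :
    (cutPrune T c).par x = T.par x := by
  simp only [cutPrune]; rw [if_pos h]

lemma parP_neg {x : ℕ}
    (h : ¬(x ∈ T.nodes ∧ x ∉ rootPart T c ∧ (x, T.par x) ∉ c)) :
    (cutPrune T c).par x = x := by
  simp only [cutPrune]; rw [if_neg h]

lemma edge0_mem {x : ℕ} (h : (x, T.par x) ∈ c) :
    (T.par^[0] x, T.par^[0+1] x) ∈ c := by simpa using h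

lemma edge0_mem' {x : ℕ} (h : (T.par^[0] x, T.par^[0+1] x) ∈ c) :
    (x, T.par x) ∈ c := by simpa using h

/-- If `x` is a pruned node whose edge to its parent is not cut, its cut index
is at least 1 and the prune parent is the true parent, also pruned. -/
lemma prune_step (hT : IsLionsForest T) (hc : AdmCut T c) {x : ℕ}
    (hxn : x ∈ T.nodes) (hxR : x ∉ rootPart T c) (hx0 : (x, T.par x) ∉ c) :
    ∃ K, (T.par^[K] x, T.par^[K+1] x) ∈ c ∧ 1 ≤ K ∧
      T.par x ∉ rootPart T c := by
  obtain ⟨K, hK⟩ := notR_exists_cut T c hxn hxR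
  have hK1 : 1 ≤ K := by
    rcases Nat.eq_zero_or_pos K with rfl | h
    · exact absurd (edge0_mem' T c hK) hx0
    · exact h
  have : T.par^[1] x ∉ rootPart T c := cut_anc_notR T c hT hxn hK hK1
  exact ⟨K, hK, hK1, by simpa using this⟩

lemma prune_isLions (hT : IsLionsForest T) (hc : AdmCut T c) :
    IsLionsForest (cutPrune T c) := by
  set R := rootPart T c with hR
  refine ⟨?_, ?_, ?_, ?_, ?_, ?_, ?_, ?_, ?_, ?_⟩
  · -- parent stays in nodes
    intro x hx
    rw [memP_iff] at hx
    by_cases h0 : (x, T.par x) ∈ c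
    · rw [parP_neg T c (by tauto)]
      rw [memP_iff]; exact hx
    · rw [parP_pos T c ⟨hx.1, hx.2, h0⟩, memP_iff]
      obtain ⟨K, hK, hK1, hpR⟩ := prune_step T c hT hc hx.1 hx.2 h0
      exact ⟨hT.1 x hx.1, hpR⟩
  · intro x hx
    rw [memP_iff] at hx
    exact parP_neg T c (by tauto)
  · intro x hx
    rw [memP_iff] at hx
    obtain ⟨K, hK⟩ := notR_exists_cut T c hx.1 hx.2
    refine ⟨K, ?_⟩
    rw [cutPrune_iter T c hT hc hx.1 hK (le_refl K)]
    apply parP_neg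
    rintro ⟨-, -, hcon⟩
    apply hcon
    have : T.par^[K+1] x = T.par (T.par^[K] x) := Function.iterate_succ_apply' _ _ _
    rw [← this]; exact hK
  · intro x hx
    rw [memP_iff] at hx
    show (if x ∈ T.nodes ∧ x ∉ R then T.lab x else none) = none
    rw [if_neg hx]
  · intro x hx
    rw [memP_iff] at hx
    show (if x ∈ T.nodes ∧ x ∉ R then T.lab x else none) ≠ none
    rw [if_pos hx]
    exact hT.2.2.2.2.1 x hx.1
  · intro x hx
    rw [Finset.mem_coe, memP_iff]
    exact ⟨hT.2.2.2.2.2.1 hx.1, hx.2⟩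
  · -- partition
    have e1 : (cutPrune T c).blocks = trace Rᶜ T.blocks := by
      ext s
      constructor
      · rintro ⟨hne, g, hg, rfl⟩
        exact ⟨hne, g, hg, Set.diff_eq g R⟩
      · rintro ⟨hne, g, hg, rfl⟩
        exact ⟨hne, g, hg, (Set.diff_eq g R).symm⟩
    have e2 : (↑(cutPrune T c).nodes : Set ℕ) \ (cutPrune T c).h0 =
        ((↑T.nodes : Set ℕ) \ T.h0) ∩ Rᶜ := by
      rw [cutPrune_nodes_coe]
      show ((↑T.nodes : Set ℕ) \ R) \ (T.h0 \ R) = _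
      ext a
      simp only [Set.mem_diff, Set.mem_inter_iff, Set.mem_compl_iff,
        Finset.mem_coe]
      tauto
    rw [e1, e2]
    exact trace_partition hT.2.2.2.2.2.2.1
  · -- h0 root
    rintro ⟨u, hu⟩
    have hu' : u ∈ T.h0 ∧ u ∉ R := hu
    have hun : u ∈ T.nodes := hT.2.2.2.2.2.1 hu'.1
    obtain ⟨K, hK⟩ := notR_exists_cut T c hun hu'.2
    have hKd : K < fdepth T u := cut_lt_depth T c hT hc hun hK
    have hpath : ∀ j, j ≤ K → T.par^[j] u ∈ T.h0 := by
      intro j hj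
      induction j with
      | zero => simpa using hu'.1
      | succ j ih =>
        have hj' : j ≤ K := by omega
        have hnr : T.par (T.par^[j] u) ≠ T.par^[j] u := by
          intro hfix
          have : fdepth T (T.par^[j] u) = 0 :=
            (fdepth_zero_iff T hT (iter_mem_nodes T hT hun j)).mpr hfix
          have : fdepth T (T.par^[j] u) = fdepth T u - j :=
            fdepth_iterate T hT hun (by omega)
          omega
        rw [Function.iterate_succ_apply']
        exact h0_anc T hT (ih hj') hnr
    refine ⟨T.par^[K] u, ⟨hpath K (le_refl K), ?_⟩, ?_⟩
    · exact cut_anc_notR T c hT hun hK (le_refl K)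
    · apply parP_neg
      rintro ⟨-, -, hcon⟩
      apply hcon
      have : T.par^[K+1] u = T.par (T.par^[K] u) :=
        Function.iterate_succ_apply' _ _ _
      rw [← this]; exact hK
  · -- condition (2.2)
    intro h' hh' x hx y hy hdlt
    obtain ⟨hne, h, hh, rfl⟩ := hyper_prune_src T c hh'
    have hxn : x ∈ T.nodes := hyper_subset_nodes T hT hh hx.1
    have hyn : y ∈ T.nodes := hyper_subset_nodes T hT hh hy.1
    obtain ⟨Kx, hKx⟩ := notR_exists_cut T c hxn hx.2
    obtain ⟨Ky, hKy⟩ := notR_exists_cut T c hyn hy.2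
    rw [cutPrune_fdepth T c hT hc hxn hKx,
      cutPrune_fdepth T c hT hc hyn hKy] at hdlt
    have hKy1 : 1 ≤ Ky := by omega
    have hpy : T.par y ∈ h :=
      prune_key T c hT hc hh hx.1 hy.1 hKx hKy hKy1 (Or.inl hdlt)
    have hy0 : (y, T.par y) ∉ c := by
      intro h0
      have := cut_unique T c hc hyn (edge0_mem T c h0) hKy
      omega
    have hpyR : T.par y ∉ R := by
      have := cut_anc_notR T c hT hyn hKy hKy1
      simpa using this
    rw [parP_pos T c ⟨hyn, hy.2, hy0⟩]
    exact ⟨hpy, hpyR⟩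
  · -- condition (2.3)
    intro h' hh' x hx y hy hxnr hynr hdeq hppne
    obtain ⟨hne, h, hh, rfl⟩ := hyper_prune_src T c hh'
    have hxn : x ∈ T.nodes := hyper_subset_nodes T hT hh hx.1
    have hyn : y ∈ T.nodes := hyper_subset_nodes T hT hh hy.1
    have hx0 : (x, T.par x) ∉ c := by
      intro h0
      exact hxnr (parP_neg T c (by tauto))
    have hy0 : (y, T.par y) ∉ c := by
      intro h0
      exact hynr (parP_neg T c (by tauto))
    obtain ⟨Kx, hKx, hKx1, hpxR⟩ := prune_step T c hT hc hxn hx.2 hx0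
    obtain ⟨Ky, hKy, hKy1, hpyR⟩ := prune_step T c hT hc hyn hy.2 hy0
    rw [cutPrune_fdepth T c hT hc hxn hKx,
      cutPrune_fdepth T c hT hc hyn hKy] at hdeq
    rw [parP_pos T c ⟨hxn, hx.2, hx0⟩, parP_pos T c ⟨hyn, hy.2, hy0⟩] at hppne ⊢
    have hpy : T.par y ∈ h :=
      prune_key T c hT hc hh hx.1 hy.1 hKx hKy hKy1
        (Or.inr ⟨hdeq, hKx1, hppne⟩)
    have hpx : T.par x ∈ h :=
      prune_key T c hT hc hh hy.1 hx.1 hKy hKx hKx1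
        (Or.inr ⟨hdeq.symm, hKy1, fun e => hppne e.symm⟩)
    exact ⟨⟨hpx, hpxR⟩, ⟨hpy, hpyR⟩⟩

end Main
section Main2

variable {d : ℕ} (T : LForest d) (c : Set (ℕ × ℕ))

lemma memR_iff (x : ℕ) :
    x ∈ (cutRoot T c).nodes ↔ x ∈ rootPart T c := by
  simp only [cutRoot, Finset.mem_filter]
  exact ⟨fun h => h.2, fun h => ⟨h.1, h⟩⟩

lemma parR_pos {x : ℕ} (h : x ∈ rootPart T c) :
    (cutRoot T c).par x = T.par x := by
  simp only [cutRoot]; rw [if_pos h]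

lemma parR_neg {x : ℕ} (h : x ∉ rootPart T c) :
    (cutRoot T c).par x = x := by
  simp only [cutRoot]; rw [if_neg h]

lemma root_isLions (hT : IsLionsForest T) (hc : AdmCut T c) :
    IsLionsForest (cutRoot T c) := by
  set R := rootPart T c with hR
  refine ⟨?_, ?_, ?_, ?_, ?_, ?_, ?_, ?_, ?_, ?_⟩
  · intro x hx
    rw [memR_iff] at hx
    rw [parR_pos T c hx, memR_iff]
    exact rootPart_par_closed T c hT hx
  · intro x hx
    rw [memR_iff] at hx
    exact parR_neg T c hx
  · intro x hx
    rw [memR_iff] at hx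
    refine ⟨fdepth T x, ?_⟩
    rw [cutRoot_iter T c hT hx, parR_pos T c (rootPart_iter_closed T c hT hx _)]
    exact fdepth_spec T hT hx.1
  · intro x hx
    rw [memR_iff] at hx
    show (if x ∈ R then T.lab x else none) = none
    rw [if_neg hx]
  · intro x hx
    rw [memR_iff] at hx
    show (if x ∈ R then T.lab x else none) ≠ none
    rw [if_pos hx]
    exact hT.2.2.2.2.1 x hx.1
  · intro x hx
    rw [Finset.mem_coe, memR_iff]
    exact hx.2
  · have e1 : (cutRoot T c).blocks = trace R T.blocks := rfl
    have e2 : (↑(cutRoot T c).nodes : Set ℕ) \ (cutRoot T c).h0 =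
        ((↑T.nodes : Set ℕ) \ T.h0) ∩ R := by
      rw [cutRoot_nodes_coe]
      show R \ (T.h0 ∩ R) = _
      ext a
      simp only [Set.mem_diff, Set.mem_inter_iff, Finset.mem_coe]
      constructor
      · rintro ⟨haR, hno⟩
        exact ⟨⟨haR.1, fun h => hno ⟨h, haR⟩⟩, haR⟩
      · rintro ⟨⟨-, h0⟩, haR⟩
        exact ⟨haR, fun h => h0 h.1⟩
    rw [e1, e2]
    exact trace_partition hT.2.2.2.2.2.2.1
  · rintro ⟨u, hu⟩
    have hu' : u ∈ T.h0 ∧ u ∈ R := hu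
    obtain ⟨x0, hx0, hx0r⟩ := hT.2.2.2.2.2.2.2.1 ⟨u, hu'.1⟩
    have hx0R : x0 ∈ R := root_mem_rootPart T c hc (hT.2.2.2.2.2.1 hx0) hx0r
    refine ⟨x0, ⟨hx0, hx0R⟩, ?_⟩
    rw [parR_pos T c hx0R]
    exact hx0r
  · intro h' hh' x hx y hy hdlt
    obtain ⟨hne, h, hh, rfl⟩ := hyper_root_src T c hh'
    rw [cutRoot_fdepth T c hT hx.2, cutRoot_fdepth T c hT hy.2] at hdlt
    have hpy : T.par y ∈ h := hT.2.2.2.2.2.2.2.2.1 h hh x hx.1 y hy.1 hdlt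
    rw [parR_pos T c hy.2]
    exact ⟨hpy, rootPart_par_closed T c hT hy.2⟩
  · intro h' hh' x hx y hy hxnr hynr hdeq hppne
    obtain ⟨hne, h, hh, rfl⟩ := hyper_root_src T c hh'
    rw [cutRoot_fdepth T c hT hx.2, cutRoot_fdepth T c hT hy.2] at hdeq
    rw [parR_pos T c hx.2] at hxnr hppne ⊢
    rw [parR_pos T c hy.2] at hynr hppne ⊢
    have := hT.2.2.2.2.2.2.2.2.2 h hh x hx.1 y hy.1 hxnr hynr hdeq hppne
    exact ⟨⟨this.1, rootPart_par_closed T c hT hx.2⟩,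
      ⟨this.2, rootPart_par_closed T c hT hy.2⟩⟩

lemma coupled_part (hT : IsLionsForest T) (hc : AdmCut T c) :
    T.blocks ∈ coupled (((↑T.nodes : Set ℕ) \ rootPart T c) \ T.h0)
      (rootPart T c \ T.h0) (cutPrune T c).blocks (cutRoot T c).blocks := by
  set R := rootPart T c with hR
  have hRsub : R ⊆ ↑T.nodes := rootPart_subset_nodes T c
  have hblocks := hT.2.2.2.2.2.2.1
  have hMN : (((↑T.nodes : Set ℕ) \ R) \ T.h0) ∪ (R \ T.h0) =
      (↑T.nodes : Set ℕ) \ T.h0 := by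
    ext a
    simp only [Set.mem_union, Set.mem_diff, Finset.mem_coe]
    constructor
    · rintro (⟨⟨h1, -⟩, h2⟩ | ⟨h1, h2⟩)
      exacts [⟨h1, h2⟩, ⟨hRsub h1, h2⟩]
    · rintro ⟨h1, h2⟩
      by_cases hr : a ∈ R
      · exact Or.inr ⟨hr, h2⟩
      · exact Or.inl ⟨⟨h1, hr⟩, h2⟩
  refine ⟨by rw [hMN]; exact hblocks, ?_, ?_⟩
  · ext s
    constructor
    · rintro ⟨hne, g, hg, rfl⟩
      refine ⟨hne, g, hg, ?_⟩
      have hgsub := hblocks.2.1 g hg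
      ext a
      simp only [Set.mem_inter_iff, Set.mem_diff, Finset.mem_coe]
      constructor
      · rintro ⟨hag, ⟨-, haR⟩, -⟩
        exact ⟨hag, haR⟩
      · rintro ⟨hag, haR⟩
        have := hgsub hag
        exact ⟨hag, ⟨this.1, haR⟩, this.2⟩
    · rintro ⟨hne, g, hg, rfl⟩
      refine ⟨hne, g, hg, ?_⟩
      have hgsub := hblocks.2.1 g hg
      ext a
      simp only [Set.mem_inter_iff, Set.mem_diff, Finset.mem_coe]
      constructor
      · rintro ⟨hag, haR⟩
        have := hgsub hag
        exact ⟨hag, ⟨this.1, haR⟩, this.2⟩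
      · rintro ⟨hag, ⟨-, haR⟩, -⟩
        exact ⟨hag, haR⟩
  · ext s
    constructor
    · rintro ⟨hne, g, hg, rfl⟩
      refine ⟨hne, g, hg, ?_⟩
      have hgsub := hblocks.2.1 g hg
      ext a
      simp only [Set.mem_inter_iff, Set.mem_diff]
      constructor
      · rintro ⟨hag, haR, -⟩
        exact ⟨hag, haR⟩
      · rintro ⟨hag, haR⟩
        exact ⟨hag, haR, (hgsub hag).2⟩
    · rintro ⟨hne, g, hg, rfl⟩
      refine ⟨hne, g, hg, ?_⟩
      have hgsub := hblocks.2.1 g hg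
      ext a
      simp only [Set.mem_inter_iff, Set.mem_diff]
      constructor
      · rintro ⟨hag, haR⟩
        exact ⟨hag, haR, (hgsub hag).2⟩
      · rintro ⟨hag, haR, -⟩
        exact ⟨hag, haR⟩

lemma uncoupled_part (hT : IsLionsForest T) (hc : AdmCut T c) :
    ∀ h ∈ (cutPrune T c).blocks,
      (∀ x ∈ h, ¬ (cutPrune T c).par x = x) → h ∈ T.blocks := by
  rintro h' ⟨hne, h, hb, rfl⟩ hroots
  set R := rootPart T c with hRdef
  have hhne : h.Nonempty := by
    obtain ⟨a, ha⟩ := hne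
    exact ⟨a, ha.1⟩
  have hhyp : h ∈ hyper T := ⟨Or.inl hb, by simpa using hhne.ne_empty⟩
  have hRempty : h ∩ R = ∅ := by
    by_contra hcon
    obtain ⟨z, hz⟩ := Set.nonempty_iff_ne_empty.mpr hcon
    obtain ⟨x, hx⟩ := hne
    have hxn : x ∈ T.nodes := hyper_subset_nodes T hT hhyp hx.1
    obtain ⟨Kx, hKx⟩ := notR_exists_cut T c hxn hx.2
    have hpath : ∀ j, j ≤ Kx → T.par^[j] x ∈ h := by
      intro j hj
      induction j with
      | zero => simpa using hx.1
      | succ j ih =>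
        have hj' : j ≤ Kx := by omega
        have hu : T.par^[j] x ∈ h := ih hj'
        have hcut := cut_shift T c hKx hj'
        have : T.par (T.par^[j] x) ∈ h :=
          lemmaE T c hT hc hhyp hz.1 hz.2 hu hcut (by omega)
        rwa [Function.iterate_succ_apply']
    have hw : T.par^[Kx] x ∈ h := hpath Kx (le_refl Kx)
    have hwR : T.par^[Kx] x ∉ R := cut_anc_notR T c hT hxn hKx (le_refl Kx)
    apply hroots (T.par^[Kx] x) ⟨hw, hwR⟩
    apply parP_neg
    rintro ⟨-, -, hcon'⟩
    apply hcon'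
    have : T.par^[Kx+1] x = T.par (T.par^[Kx] x) :=
      Function.iterate_succ_apply' _ _ _
    rw [← this]; exact hKx
  have : h \ R = h := by
    ext a
    simp only [Set.mem_diff]
    refine ⟨fun ha => ha.1, fun ha => ⟨ha, fun hr => ?_⟩⟩
    have : a ∈ h ∩ R := ⟨ha, hr⟩
    rw [hRempty] at this
    exact this
  rwa [this]

end Main2
/-- For a Lions tree `T` and an admissible cut `c`, the prune `T_c^P` and the
root `T_c^R` are Lions forests, and the original partition `H^T` is a
coupling between their block partitions which is moreover a Lions coupling:
every block of the prune containing no root of the prune is itself a block of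
`H^T` (i.e. uncoupled). -/
theorem stmt18 (d : ℕ) (T : LForest d) (hT : IsLionsForest T)
    (htree : ∃! r : ℕ, r ∈ T.nodes ∧ T.par r = r)
    (c : Set (ℕ × ℕ)) (hc : AdmCut T c) :
    IsLionsForest (cutPrune T c) ∧
    IsLionsForest (cutRoot T c) ∧
    T.blocks ∈ coupled (((↑T.nodes : Set ℕ) \ rootPart T c) \ T.h0)
      (rootPart T c \ T.h0) (cutPrune T c).blocks (cutRoot T c).blocks ∧
    (∀ h ∈ (cutPrune T c).blocks,
      (∀ x ∈ h, ¬ (cutPrune T c).par x = x) → h ∈ T.blocks) := by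
  exact ⟨prune_isLions T c hT hc, root_isLions T c hT hc,
    coupled_part T c hT hc, uncoupled_part T c hT hc⟩
end
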